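/- arXiv:2206.14629 — 5 statements merged into one kernel-verified Lean document; each statement's English description precedes it below -/
import Mathlib

section
/- Let (φ₁,…,φₙ) : A_• → B_• be a morphism of n-angles, together with chosen trapez diagrams for A_• (supporting objects A_{i+1.5} and data α_i', α_i'', αₙ^{i+1}) and for B_• (supporting objects B_{i+1.5} and data β_i', β_i'', βₙ^{i+1}). Suppose that for each i ∈ {0,1,…,n−3} a map φ_{i+2.5} : A_{i+2.5} → B_{i+2.5} is chosen (with conventions φ_{1.5} := φ₁, A_{1.5} := A₁, B_{1.5} := B₁, α₁'' := α₁, β₁'' := β₁, and with A_{n−0.5} := Aₙ, B_{n−0.5} := Bₙ) satisfying φ_{i+2.5}∘α_{i+2}' = β_{i+2}'∘φ_{i+2} and βₙ^{i+2}∘φ_{i+2.5} = (Σφ_{i+1.5})∘αₙ^{i+2}. Then the remaining squares of the trapez prism automatically commute: φ_{i+2}∘α_{i+1}'' = β_{i+1}''∘φ_{i+1.5} for all i ∈ {1,…,n−3}, so that the entire trapez prism diagram commutes. -/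
open CategoryTheory CategoryTheory.Limits CategoryTheory.Pretriangulated

universe v u

/-- Iterated suspension `Σ^k` on objects, where `Σ = shiftFunctor T (1 : ℤ)`. -/
def shiftIter (T : Type u) [Category.{v} T] [HasShift T ℤ] : ℕ → T → T
  | 0, X => X
  | k + 1, X => (shiftFunctor T (1 : ℤ)).obj (shiftIter T k X)

/-- Iterated suspension `Σ^k` on morphisms. -/
def shiftIterMap (T : Type u) [Category.{v} T] [HasShift T ℤ] :
    ∀ (k : ℕ) {X Y : T}, (X ⟶ Y) → (shiftIter T k X ⟶ shiftIter T k Y)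
  | 0, _, _, f => f
  | k + 1, _, _, f => (shiftFunctor T (1 : ℤ)).map (shiftIterMap T k f)

/-- An `n`-`Σ`-sequence `A₁ → A₂ → ⋯ → Aₙ → Σ^{n-2} A₁` (with suspension `Σ^{n-2}`,
where `Σ` is the shift by `1` of the ambient triangulated category).
Only the data indexed by `1 ≤ i ≤ n` is relevant. -/
structure NSeq (T : Type u) [Category.{v} T] [HasShift T ℤ] (n : ℕ) where
  obj : ℕ → T
  map : ∀ i : ℕ, obj i ⟶ obj (i + 1)
  last : obj n ⟶ shiftIter T (n - 2) (obj 1)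

variable (T : Type u) [Category.{v} T] [HasZeroObject T] [Preadditive T] [HasShift T ℤ]
  [∀ k : ℤ, (shiftFunctor T k).Additive] [Pretriangulated T]

/-- A trapez diagram for an `n`-`Σ`-sequence `A`, with supporting objects `supp i = A_{i+0.5}`
(`1 ≤ i ≤ n-1`, with the conventions `supp 1 = A₁`, `supp (n-1) = Aₙ`), maps
`fst i = αᵢ' : Aᵢ ⟶ A_{i+0.5}`, `snd i = αᵢ'' : A_{i+0.5} ⟶ A_{i+1}`,
`conn i = αₙ^{i+1} : A_{i+1.5} ⟶ Σ A_{i+0.5}`, distinguished triangles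
`A_{i+0.5} → A_{i+1} → A_{i+1.5} → Σ A_{i+0.5}` for `1 ≤ i ≤ n-2`, factorizations
`αᵢ = αᵢ'' ∘ αᵢ'` for `2 ≤ i ≤ n-2`, and
`αₙ = (Σ^{n-3} αₙ²) ∘ ⋯ ∘ (Σ αₙ^{n-2}) ∘ αₙ^{n-1}` (encoded by the composites `comp`). -/
structure Trapez {n : ℕ} (A : NSeq T n) where
  supp : ℕ → T
  supp_one : supp 1 = A.obj 1
  supp_last : supp (n - 1) = A.obj n
  fst : ∀ i : ℕ, A.obj i ⟶ supp i
  snd : ∀ i : ℕ, supp i ⟶ A.obj (i + 1)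
  conn : ∀ i : ℕ, supp (i + 1) ⟶ (shiftFunctor T (1 : ℤ)).obj (supp i)
  snd_one : snd 1 = eqToHom supp_one ≫ A.map 1
  fst_last : ∀ h : n - 1 + 1 = n, fst (n - 1) = A.map (n - 1) ≫ eqToHom (congrArg A.obj h) ≫ eqToHom supp_last.symm
  fac : ∀ i : ℕ, 2 ≤ i → i ≤ n - 2 → A.map i = fst i ≫ snd i
  tri : ∀ i : ℕ, 1 ≤ i → i ≤ n - 2 →
    Triangle.mk (snd i) (fst (i + 1)) (conn i) ∈ distTriang T
  comp : ∀ k : ℕ, supp (k + 1) ⟶ shiftIter T k (supp 1)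
  comp_zero : comp 0 = 𝟙 (supp 1)
  comp_succ : ∀ k : ℕ, comp (k + 1) = conn (k + 1) ≫ (shiftFunctor T (1 : ℤ)).map (comp k)
  last_eq : ∀ h : n - 2 + 1 = n - 1,
    A.last = eqToHom supp_last.symm ≫ eqToHom (congrArg supp h.symm) ≫ comp (n - 2) ≫
      eqToHom (congrArg (shiftIter T (n - 2)) supp_one)

/-- The predicate that an `n`-`Σ`-sequence is an `n`-angle of the `(n-2)`-cluster tilting
`n`-angulated category with objects `C`: all its objects lie in `C` and it admits a
trapez diagram. -/
def IsNAngle (C : Set T) {n : ℕ} (A : NSeq T n) : Prop :=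
  (∀ i : ℕ, 1 ≤ i → i ≤ n → A.obj i ∈ C) ∧ Nonempty (Trapez T A)

/-- `φ` is a morphism of `n`-`Σ`-sequences `A ⟶ B`. -/
def IsNSeqHom {n : ℕ} (A B : NSeq T n) (φ : ∀ i : ℕ, A.obj i ⟶ B.obj i) : Prop :=
  (∀ i : ℕ, 1 ≤ i → i ≤ n - 1 → A.map i ≫ φ (i + 1) = φ i ≫ B.map i) ∧
  A.last ≫ shiftIterMap T (n - 2) (φ 1) = φ n ≫ B.last

/- **Cluster-tilting context.** `C` is the class of objects of a full additive subcategory,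
closed under direct summands (retracts), stable under `Σ^{n-2}`, functorially finite
(left and right `C`-approximations exist), and `(n-2)`-cluster tilting. -/

variable [IsTriangulated T] [HasBinaryBiproducts T]


set_option linter.unusedSectionVars false in
lemma shiftIter_shift (j : ℕ) (X : T) :
    shiftIter T j ((shiftFunctor T (1 : ℤ)).obj X)
      = (shiftFunctor T (1 : ℤ)).obj (shiftIter T j X) := by
  induction j with
  | zero => rfl
  | succ k ih => show (shiftFunctor T (1:ℤ)).obj _ = _ ; rw [ih]; rfl

set_option linter.unusedSectionVars false in
lemma shiftIter_add (m j : ℕ) (X : T) :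
    shiftIter T m (shiftIter T j X) = shiftIter T (m + j) X := by
  induction m with
  | zero => rw [Nat.zero_add]; rfl
  | succ m ih =>
      show (shiftFunctor T (1:ℤ)).obj _ = _
      rw [ih, Nat.succ_add]; rfl

set_option linter.unusedSectionVars false in
lemma shiftIterMap_eq_zero {j : ℕ} {X Y : T} {f : X ⟶ Y}
    (h : shiftIterMap T j f = 0) : f = 0 := by
  induction j with
  | zero => exact h
  | succ k ih =>
      apply ih
      apply (shiftFunctor T (1:ℤ)).map_injective
      rw [Functor.map_zero]
      exact h

set_option linter.unusedSectionVars false in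
lemma hom_vanish {n : ℕ} {C : Set T}
    (hC_shift : ∀ X : T, X ∈ C ↔ shiftIter T (n - 2) X ∈ C)
    (hCT_right : ∀ X : T, X ∈ C ↔
      ∀ Z : T, Z ∈ C → ∀ i : ℕ, 1 ≤ i → i ≤ n - 3 → ∀ f : X ⟶ shiftIter T i Z, f = 0)
    {j : ℕ} (hj1 : 1 ≤ j) (hj2 : j ≤ n - 3)
    {X Y : T} (hX : X ∈ C) (hY : Y ∈ C) (f : shiftIter T j X ⟶ Y) : f = 0 := by
  set m := n - 2 - j with hm
  have e : shiftIter T m (shiftIter T j X) = shiftIter T (n - 2) X := by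
    rw [shiftIter_add]
    congr 1
    omega
  have h0 : eqToHom e.symm ≫ shiftIterMap T m f = 0 :=
    (hCT_right _).mp ((hC_shift X).mp hX) Y hY m (by omega) (by omega) _
  have h1 : shiftIterMap T m f = 0 := by
    have := congrArg (fun g => eqToHom e ≫ g) h0
    simpa using this
  exact shiftIterMap_eq_zero T h1

lemma dist_shift_one {X Y Z : T} (u : X ⟶ Y) (v : Y ⟶ Z)
    (w : Z ⟶ (shiftFunctor T (1:ℤ)).obj X)
    (h : Triangle.mk u v w ∈ distTriang T) :
    Triangle.mk ((shiftFunctor T (1:ℤ)).map u) ((shiftFunctor T (1:ℤ)).map v)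
      (-(shiftFunctor T (1:ℤ)).map w) ∈ distTriang T := by
  have h3 := rot_of_distTriang _ (rot_of_distTriang _ (rot_of_distTriang _ h))
  refine isomorphic_distinguished _ h3 _ ?_
  refine Triangle.isoMk _ _ (Iso.refl _) ⟨-(𝟙 ((shiftFunctor T (1:ℤ)).obj Y)), -(𝟙 ((shiftFunctor T (1:ℤ)).obj Y)),
    (Preadditive.neg_comp_neg _ _).trans (Category.id_comp _),
    (Preadditive.neg_comp_neg _ _).trans (Category.id_comp _)⟩ (Iso.refl _)
    ?_ ?_ ?_ <;> simp [Triangle.rotate]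
  · show (shiftFunctor T (1:ℤ)).map u ≫ (-𝟙 _) = 𝟙 _ ≫ (-(shiftFunctor T (1:ℤ)).map u); simp
  · show (shiftFunctor T (1:ℤ)).map v ≫ 𝟙 _ = (-𝟙 _) ≫ (-(shiftFunctor T (1:ℤ)).map v); simp
  · show (-(shiftFunctor T (1:ℤ)).map w) ≫ (shiftFunctor T (1:ℤ)).map (𝟙 _) =
      𝟙 _ ≫ (-(shiftFunctor T (1:ℤ)).map w); simp

lemma dist_shiftIter (j : ℕ) {X Y Z : T} (u : X ⟶ Y) (v : Y ⟶ Z)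
    (w : Z ⟶ (shiftFunctor T (1:ℤ)).obj X)
    (h : Triangle.mk u v w ∈ distTriang T) :
    Triangle.mk (shiftIterMap T j u) (shiftIterMap T j v)
      (((-1 : ℤ)^j) • (shiftIterMap T j w ≫ eqToHom (shiftIter_shift T j X)))
      ∈ distTriang T := by
  induction j with
  | zero => show Triangle.mk u v ((1:ℤ) • (w ≫ 𝟙 _)) ∈ distTriang T; rwa [one_smul, Category.comp_id]
  | succ k ih =>
      have h1 := dist_shift_one T _ _ _ ih
      show Triangle.mk ((shiftFunctor T (1:ℤ)).map (shiftIterMap T k u))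
        ((shiftFunctor T (1:ℤ)).map (shiftIterMap T k v))
        (((-1 : ℤ)^(k+1)) • (shiftIterMap T (k+1) w ≫ eqToHom (shiftIter_shift T (k+1) X))) ∈ distTriang T
      convert h1 using 2
      simp [shiftIterMap, Functor.map_zsmul, Functor.map_comp, eqToHom_map,
        pow_succ, mul_smul, neg_smul]
      rfl

/-- Given a morphism `(φ₁,…,φₙ)` of `n`-angles with chosen trapez diagrams,
and chosen fill-ins `ψ (i+2) = φ_{i+2.5}` between the supporting objects (with
`ψ 1 = φ_{1.5} = φ₁`) satisfying `φ_{i+2.5} ∘ α_{i+2}' = β_{i+2}' ∘ φ_{i+2}` and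
`βₙ^{i+2} ∘ φ_{i+2.5} = (Σ φ_{i+1.5}) ∘ αₙ^{i+2}` for `0 ≤ i ≤ n-3`, the remaining squares
commute automatically: `φ_{i+2} ∘ α_{i+1}'' = β_{i+1}'' ∘ φ_{i+1.5}` for `1 ≤ i ≤ n-3`,
so the whole trapez prism commutes. -/
theorem trapez_prism_commutes
    (n : ℕ) (hn : 3 < n) (C : Set T)
    (hC_retract : ∀ (X Y : T) (r : X ⟶ Y) (s : Y ⟶ X), s ≫ r = 𝟙 Y → X ∈ C → Y ∈ C)
    (hC_zero : ∀ X : T, IsZero X → X ∈ C)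
    (hC_biprod : ∀ X Y : T, X ∈ C → Y ∈ C → (X ⊞ Y) ∈ C)
    (hC_shift : ∀ X : T, X ∈ C ↔ shiftIter T (n - 2) X ∈ C)
    (hC_left : ∀ X : T, ∃ Y : T, Y ∈ C ∧ ∃ f : X ⟶ Y,
      ∀ Z : T, Z ∈ C → ∀ g : X ⟶ Z, ∃ h : Y ⟶ Z, f ≫ h = g)
    (hC_right : ∀ X : T, ∃ Y : T, Y ∈ C ∧ ∃ f : Y ⟶ X,
      ∀ Z : T, Z ∈ C → ∀ g : Z ⟶ X, ∃ h : Z ⟶ Y, h ≫ f = g)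
    (hCT_left : ∀ X : T, X ∈ C ↔
      ∀ Z : T, Z ∈ C → ∀ i : ℕ, 1 ≤ i → i ≤ n - 3 → ∀ f : Z ⟶ shiftIter T i X, f = 0)
    (hCT_right : ∀ X : T, X ∈ C ↔
      ∀ Z : T, Z ∈ C → ∀ i : ℕ, 1 ≤ i → i ≤ n - 3 → ∀ f : X ⟶ shiftIter T i Z, f = 0)
    {A B : NSeq T n}
    (hAobj : ∀ i : ℕ, 1 ≤ i → i ≤ n → A.obj i ∈ C)
    (hBobj : ∀ i : ℕ, 1 ≤ i → i ≤ n → B.obj i ∈ C)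
    (trA : Trapez T A) (trB : Trapez T B)
    (φ : ∀ i : ℕ, A.obj i ⟶ B.obj i) (hφ : IsNSeqHom T A B φ)
    (ψ : ∀ i : ℕ, trA.supp i ⟶ trB.supp i)
    (hψ_one : ψ 1 = eqToHom trA.supp_one ≫ φ 1 ≫ eqToHom trB.supp_one.symm)
    (hψ_fst : ∀ i : ℕ, i ≤ n - 3 → trA.fst (i + 2) ≫ ψ (i + 2) = φ (i + 2) ≫ trB.fst (i + 2))
    (hψ_conn : ∀ i : ℕ, i ≤ n - 3 →
      ψ (i + 2) ≫ trB.conn (i + 1) =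
        trA.conn (i + 1) ≫ (shiftFunctor T (1 : ℤ)).map (ψ (i + 1))) :
    ∀ i : ℕ, 1 ≤ i → i ≤ n - 3 →
      trA.snd (i + 1) ≫ φ (i + 2) = ψ (i + 1) ≫ trB.snd (i + 1) := by

  -- A map `Σ^j (suppA (k+1)) → Y` with `Y ∈ C`, `1 ≤ j`, `j + k ≤ n - 3` vanishes.
  have L1 : ∀ k j (Y : T), Y ∈ C → 1 ≤ j → j + k ≤ n - 3 →
      ∀ g : shiftIter T j (trA.supp (k+1)) ⟶ Y, g = 0 := by
    intro k
    induction k with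
    | zero =>
        intro j Y hY hj1 hjk g
        have hs1 : trA.supp 1 ∈ C := by
          rw [trA.supp_one]; exact hAobj 1 le_rfl (by omega)
        exact hom_vanish T hC_shift hCT_right hj1 (by omega) hs1 hY g
    | succ k ih =>
        intro j Y hY hj1 hjk g
        have htri := trA.tri (k+1) (by omega) (by omega)
        have hsd := dist_shiftIter T j _ _ _ htri
        have hzero : shiftIterMap T j (trA.fst (k+1+1)) ≫ g = 0 :=
          hom_vanish T hC_shift hCT_right hj1 (by omega)
            (hAobj (k+2) (by omega) (by omega)) hY _
        obtain ⟨g', hg'⟩ := Triangle.yoneda_exact₃ _ hsd g hzero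
        have hg0 : g' = 0 := ih (j+1) Y hY (by omega) (by omega) g'
        rw [hg', hg0, comp_zero]; rfl
  intro i hi1 hi2
  obtain ⟨m, rfl⟩ : ∃ m, i = m + 1 := ⟨i - 1, by omega⟩
  have h1 : A.map (m+2) = trA.fst (m+2) ≫ trA.snd (m+2) :=
    trA.fac (m+2) (by omega) (by omega)
  have h2 : A.map (m+2) ≫ φ (m+3) = φ (m+2) ≫ B.map (m+2) :=
    hφ.1 (m+2) (by omega) (by omega)
  have h3 : trA.fst (m+2) ≫ ψ (m+2) = φ (m+2) ≫ trB.fst (m+2) :=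
    hψ_fst m (by omega)
  have h4 : B.map (m+2) = trB.fst (m+2) ≫ trB.snd (m+2) :=
    trB.fac (m+2) (by omega) (by omega)
  have hD : trA.fst (m+2) ≫
      (trA.snd (m+2) ≫ φ (m+3) - ψ (m+2) ≫ trB.snd (m+2)) = 0 := by
    rw [Preadditive.comp_sub, ← Category.assoc, ← h1, h2, ← Category.assoc, h3,
      Category.assoc, ← h4, sub_self]
  have htri := trA.tri (m+1) (by omega) (by omega)
  obtain ⟨γ, hγ⟩ := Triangle.yoneda_exact₃ _ htri
    (trA.snd (m+2) ≫ φ (m+3) - ψ (m+2) ≫ trB.snd (m+2)) hD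
  have hγ0 : γ = 0 :=
    L1 m 1 (B.obj (m+3)) (hBobj (m+3) (by omega) (by omega)) le_rfl (by omega) γ
  rw [hγ0, comp_zero] at hγ
  have := sub_eq_zero.mp hγ
  exact this
end

section
/- Let A₁ →α₁→ A₂ →⋯→ Aₙ →αₙ→ Σ^{n−2}A₁ be an n-angle in 𝒞 equipped with a trapez diagram. Then for each i ∈ {1,…,n−3} the map α_{i+1}'' : A_{i+1.5} → A_{i+2} is a left 𝒞-approximation: for every object C ∈ 𝒞 and every map γ : A_{i+1.5} → C there exists a map γ̄ : A_{i+2} → C with γ̄∘α_{i+1}'' = γ. -/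
open CategoryTheory CategoryTheory.Limits CategoryTheory.Pretriangulated

universe v u

variable (T : Type u) [Category.{v} T] [HasZeroObject T] [Preadditive T] [HasShift T ℤ]
  [∀ k : ℤ, (shiftFunctor T k).Additive] [Pretriangulated T]

/- **Cluster-tilting context.** `C` is the class of objects of a full additive subcategory,
closed under direct summands (retracts), stable under `Σ^{n-2}`, functorially finite
(left and right `C`-approximations exist), and `(n-2)`-cluster tilting. -/

variable [IsTriangulated T] [HasBinaryBiproducts T]

/-- In an `(n-2)`-cluster tilting `n`-angulated category (`n > 3`), for any
`n`-angle with a trapez diagram, each map `α_{i+1}'' : A_{i+1.5} ⟶ A_{i+2}` (for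
`1 ≤ i ≤ n-3`) is a left `C`-approximation. -/
theorem trapez_snd_is_left_approximation
    (n : ℕ) (hn : 3 < n) (C : Set T)
    (hC_retract : ∀ (X Y : T) (r : X ⟶ Y) (s : Y ⟶ X), s ≫ r = 𝟙 Y → X ∈ C → Y ∈ C)
    (hC_zero : ∀ X : T, IsZero X → X ∈ C)
    (hC_biprod : ∀ X Y : T, X ∈ C → Y ∈ C → (X ⊞ Y) ∈ C)
    (hC_shift : ∀ X : T, X ∈ C ↔ shiftIter T (n - 2) X ∈ C)
    (hC_left : ∀ X : T, ∃ Y : T, Y ∈ C ∧ ∃ f : X ⟶ Y,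
      ∀ Z : T, Z ∈ C → ∀ g : X ⟶ Z, ∃ h : Y ⟶ Z, f ≫ h = g)
    (hC_right : ∀ X : T, ∃ Y : T, Y ∈ C ∧ ∃ f : Y ⟶ X,
      ∀ Z : T, Z ∈ C → ∀ g : Z ⟶ X, ∃ h : Z ⟶ Y, h ≫ f = g)
    (hCT_left : ∀ X : T, X ∈ C ↔
      ∀ Z : T, Z ∈ C → ∀ i : ℕ, 1 ≤ i → i ≤ n - 3 → ∀ f : Z ⟶ shiftIter T i X, f = 0)
    (hCT_right : ∀ X : T, X ∈ C ↔
      ∀ Z : T, Z ∈ C → ∀ i : ℕ, 1 ≤ i → i ≤ n - 3 → ∀ f : X ⟶ shiftIter T i Z, f = 0)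
    {A : NSeq T n} (hAobj : ∀ i : ℕ, 1 ≤ i → i ≤ n → A.obj i ∈ C)
    (tr : Trapez T A) :
    ∀ i : ℕ, 1 ≤ i → i ≤ n - 3 → ∀ Z : T, Z ∈ C → ∀ γ : tr.supp (i + 1) ⟶ Z,
      ∃ γbar : A.obj (i + 2) ⟶ Z, tr.snd (i + 1) ≫ γbar = γ := by
  intro i hi1 hi3 Z hZ γ
  -- factorization through `snd k` from the rotated distinguished triangle
  have fact : ∀ k : ℕ, 1 ≤ k → k ≤ n - 2 → ∀ (W : T) (δ : tr.supp k ⟶ W),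
      tr.conn k ≫ (shiftFunctor T (1 : ℤ)).map δ = 0 →
      ∃ ν : A.obj (k + 1) ⟶ W, δ = tr.snd k ≫ ν := by
    intro k hk1 hk2 W δ h0
    have tT := tr.tri k hk1 hk2
    obtain ⟨g, hg⟩ := Triangle.yoneda_exact₃ _ (rot_of_distTriang _ tT)
      ((shiftFunctor T (1 : ℤ)).map δ) h0
    refine ⟨(shiftFunctor T (1 : ℤ)).preimage (-g), ?_⟩
    apply (shiftFunctor T (1 : ℤ)).map_injective
    rw [Functor.map_comp]; erw [Functor.map_preimage]; refine hg.trans ?_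
    simp [Triangle.rotate]
    exact (Preadditive.neg_comp ..).trans (Preadditive.comp_neg ..).symm
  -- all maps `supp (i+1+j) ⟶ Σ^j Z` vanish for `j ≥ 1`
  have key : ∀ d j : ℕ, 1 ≤ j → i + 1 + j + d = n - 1 →
      ∀ δ : tr.supp (i + 1 + j) ⟶ shiftIter T j Z, δ = 0 := by
    intro d
    induction d with
    | zero =>
      intro j hj hjd δ
      have e : tr.supp (i + 1 + j) = A.obj n := by
        rw [show i + 1 + j = n - 1 by omega]; exact tr.supp_last
      have h1 : eqToHom e.symm ≫ δ = 0 :=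
        (hCT_right (A.obj n)).mp (hAobj n (by omega) le_rfl) Z hZ j hj (by omega) _
      calc δ = eqToHom e ≫ (eqToHom e.symm ≫ δ) := by simp
        _ = 0 := by rw [h1, comp_zero]
    | succ d IH =>
      intro j hj hjd δ
      have h0 : tr.conn (i + 1 + j) ≫ (shiftFunctor T (1 : ℤ)).map δ = 0 :=
        IH (j + 1) (by omega) (by omega) (tr.conn (i + 1 + j) ≫ (shiftFunctor T (1 : ℤ)).map δ)
      obtain ⟨ν, hν⟩ := fact (i + 1 + j) (by omega) (by omega) _ δ h0
      have hν0 : ν = 0 :=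
        (hCT_right (A.obj (i + 1 + j + 1))).mp (hAobj _ (by omega) (by omega)) Z hZ j hj
          (by omega) ν
      rw [hν, hν0, comp_zero]
  have h0 : tr.conn (i + 1) ≫ (shiftFunctor T (1 : ℤ)).map γ = 0 :=
    key (n - 3 - i) 1 le_rfl (by omega) (tr.conn (i + 1) ≫ (shiftFunctor T (1 : ℤ)).map γ)
  obtain ⟨ν, hν⟩ := fact (i + 1) (by omega) (by omega) Z γ h0
  exact ⟨ν, hν.symm⟩
end

section
/- Let A_• be an n-angle (an element of 𝒩) with A₁ = A₂ = R and first structure map α₁ = p·1_R. Then R(p)_• is a direct summand of A_• as n-Σ-sequences: there exist morphisms of n-Σ-sequences ι : R(p)_• → A_• and ρ : A_• → R(p)_• with ρ∘ι the identity of R(p)_•, and these may be chosen with ι₁ = ι₂ = ρ₁ = ρ₂ = 1_R. -/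
open CategoryTheory CategoryTheory.Limits

universe u

variable (R : Type u) [CommRing R]

/-- An `n`-`Σ`-sequence in the category of finitely generated free `R`-modules, where the
suspension `Σ` is the identity functor: a diagram `A₁ → A₂ → ⋯ → Aₙ → A₁`.
Only the data indexed by `1 ≤ i ≤ n` is relevant. -/
structure NSeqMod (n : ℕ) where
  obj : ℕ → ModuleCat.{u} R
  free : ∀ i : ℕ, 1 ≤ i → i ≤ n → Module.Free R (obj i)
  fin : ∀ i : ℕ, 1 ≤ i → i ≤ n → Module.Finite R (obj i)
  map : ∀ i : ℕ, obj i ⟶ obj (i + 1)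
  last : obj n ⟶ obj 1

variable {R}

/-- `φ` is a morphism of `n`-`Σ`-sequences `A ⟶ B`. -/
def IsSeqHom {n : ℕ} (A B : NSeqMod R n) (φ : ∀ i : ℕ, A.obj i ⟶ B.obj i) : Prop :=
  (∀ i : ℕ, 1 ≤ i → i ≤ n - 1 → A.map i ≫ φ (i + 1) = φ i ≫ B.map i) ∧
  A.last ≫ φ 1 = φ n ≫ B.last

/-- A candidate `n`-angle: consecutive composites vanish. -/
def IsCandidate {n : ℕ} (A : NSeqMod R n) : Prop :=
  (∀ i : ℕ, 1 ≤ i → i ≤ n - 2 → A.map i ≫ A.map (i + 1) = 0) ∧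
  (∀ (m : ℕ) (h : n = m + 1),
    A.map m ≫ eqToHom (congrArg A.obj h.symm) ≫ A.last = 0) ∧
  A.last ≫ A.map 1 = 0

/-- A contractible `n`-`Σ`-sequence. -/
def Contractible {n : ℕ} (A : NSeqMod R n) : Prop :=
  ∃ (Θ : ∀ i : ℕ, A.obj (i + 1) ⟶ A.obj i) (Θn : A.obj 1 ⟶ A.obj n),
    (∀ i : ℕ, 1 ≤ i → i ≤ n - 2 →
      𝟙 (A.obj (i + 1)) = A.map (i + 1) ≫ Θ (i + 1) + Θ i ≫ A.map i) ∧
    (∀ (m : ℕ) (h : n = m + 1),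
      𝟙 (A.obj (m + 1)) =
        eqToHom (congrArg A.obj h.symm) ≫ A.last ≫ Θn ≫ eqToHom (congrArg A.obj h) +
          Θ m ≫ A.map m) ∧
    𝟙 (A.obj 1) = A.map 1 ≫ Θ 1 + Θn ≫ A.last

/-- The `n`-`Σ`-sequence `F(p)_•` : `F →p→ F →p→ ⋯ →p→ F`. -/
def Fp (F : ModuleCat.{u} R) [Module.Free R F] [Module.Finite R F] (p : R) (n : ℕ) :
    NSeqMod R n where
  obj _ := F
  free _ _ _ := inferInstance
  fin _ _ _ := inferInstance
  map _ := p • 𝟙 F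
  last := p • 𝟙 F

/-- The direct sum of two `n`-`Σ`-sequences. -/
def sumSeq {n : ℕ} (A B : NSeqMod R n) : NSeqMod R n where
  obj i := ModuleCat.of R (A.obj i × B.obj i)
  free i h1 h2 := letI := A.free i h1 h2; letI := B.free i h1 h2
    inferInstanceAs (Module.Free R (A.obj i × B.obj i))
  fin i h1 h2 := letI := A.fin i h1 h2; letI := B.fin i h1 h2
    inferInstanceAs (Module.Finite R (A.obj i × B.obj i))
  map i := ModuleCat.ofHom ((A.map i).hom.prodMap (B.map i).hom)
  last := ModuleCat.ofHom (A.last.hom.prodMap B.last.hom)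

/-- Two `n`-`Σ`-sequences are isomorphic if there is a morphism between them all of whose
relevant components are isomorphisms. -/
def SeqIso {n : ℕ} (A B : NSeqMod R n) : Prop :=
  ∃ φ : ∀ i : ℕ, A.obj i ⟶ B.obj i,
    IsSeqHom A B φ ∧ ∀ i : ℕ, 1 ≤ i → i ≤ n → IsIso (φ i)

/-- Membership in the class `𝒩` of `n`-angles of the exotic `n`-angulated structure on
finitely generated free `R`-modules: `A` is isomorphic to `C_• ⊕ F(p)_•` for some
contractible candidate `n`-angle `C_•` and some finitely generated free module `F`. -/
def MemN (p : R) {n : ℕ} (A : NSeqMod R n) : Prop :=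
  ∃ (Cs : NSeqMod R n) (F : ModuleCat.{u} R) (_ : Module.Free R F) (_ : Module.Finite R F),
    IsCandidate Cs ∧ Contractible Cs ∧ SeqIso (sumSeq Cs (Fp F p n)) A

/-- The `n`-`Σ`-sequence `R(p)_•` : `R →p→ R →p→ ⋯ →p→ R`. -/
def Rp (p : R) (n : ℕ) : NSeqMod R n :=
  letI : Module.Free R (ModuleCat.of R R) := inferInstanceAs (Module.Free R R)
  letI : Module.Finite R (ModuleCat.of R R) := inferInstanceAs (Module.Finite R R)
  Fp (ModuleCat.of R R) p n


section AuxForProof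
open CategoryTheory

variable {R' : Type u} [CommRing R']

private lemma hom_RR_eq' (f : ModuleCat.of R' R' ⟶ ModuleCat.of R' R') :
    f = (show R' from f (1:R')) • 𝟙 (ModuleCat.of R' R') := by
  apply ModuleCat.hom_ext
  apply LinearMap.ext_ring
  show f (1:R') = (show R' from f (1:R')) • (1:R')
  rw [smul_eq_mul, mul_one]

private lemma smul_id_inj {c d : R'}
    (h : c • 𝟙 (ModuleCat.of R' R') = d • 𝟙 (ModuleCat.of R' R')) : c = d := by
  have h2 := congrArg (fun f : ModuleCat.of R' R' ⟶ ModuleCat.of R' R' => (show R' from f (1:R'))) h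
  have h3 : c * 1 = d * 1 := h2
  rwa [mul_one, mul_one] at h3

private lemma smul_id_eq_one {c : R'} (h : c • 𝟙 (ModuleCat.of R' R') = 𝟙 (ModuleCat.of R' R')) :
    c = 1 := smul_id_inj (by rw [h, one_smul])

private lemma subsingleton_of_finrank_zero (M : Type u) [AddCommGroup M] [Module R' M]
    [Module.Free R' M] [Module.Finite R' M] [Nontrivial R']
    (h : Module.finrank R' M = 0) : Subsingleton M := by
  have b := Module.Free.chooseBasis R' M
  haveI hie : IsEmpty (Module.Free.ChooseBasisIndex R' M) :=
    Fintype.card_eq_zero_iff.mp (by rw [← Module.finrank_eq_card_chooseBasisIndex, h])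
  refine ⟨fun x y => ?_⟩
  have hx : ∀ z : M, z = 0 := by
    intro z
    have hz := b.linearCombination_repr z
    rw [show b.repr z = 0 from Finsupp.ext fun i => (hie.elim i), map_zero] at hz
    exact hz.symm
  rw [hx x, hx y]

private lemma mem_smul_of_p_smul_eq_zero [IsLocalRing R'] {p : R'} (hp : p ≠ 0)
    {M : Type u} [AddCommGroup M] [Module R' M] [Module.Free R' M]
    {w : M} (h : p • w = 0) :
    w ∈ (IsLocalRing.maximalIdeal R') • (⊤ : Submodule R' M) := by
  set b := Module.Free.chooseBasis R' M with hb
  have hcoef : ∀ i, b.repr w i ∈ IsLocalRing.maximalIdeal R' := by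
    intro i
    have h2 : p • b.repr w = 0 := by rw [← map_smul, h, map_zero]
    have h3 : p * b.repr w i = 0 := by
      have h4 : (p • b.repr w) i = 0 := by rw [h2]; rfl
      simpa using h4
    rw [IsLocalRing.mem_maximalIdeal, mem_nonunits_iff]
    intro hu
    exact hp (hu.mul_left_eq_zero.mp h3)
  have hw := b.linearCombination_repr w
  rw [Finsupp.linearCombination_apply] at hw
  rw [← hw, Finsupp.sum]
  exact Submodule.sum_mem _ fun i _ => Submodule.smul_mem_smul (hcoef i) Submodule.mem_top

end AuxForProof

/-- If `A_•` is an `n`-angle with `A₁ = A₂ = R` and first structure map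
`α₁ = p · 1_R`, then `R(p)_•` is a direct summand of `A_•` as `n`-`Σ`-sequences, and the
splitting may be chosen to be the identity in the first two components. -/
theorem Rp_summand_of_base_p
    {R : Type u} [CommRing R] [IsLocalRing R] (p : R) (hp : p ≠ 0)
    (hmax : IsLocalRing.maximalIdeal R = Ideal.span {p})
    (hsq : IsLocalRing.maximalIdeal R ^ 2 = ⊥)
    (n : ℕ) (hn : 3 ≤ n) (hpar : Even n ∨ 2 * p = 0)
    (A : NSeqMod R n) (hA : MemN p A)
    (h₁ : A.obj 1 = ModuleCat.of R R) (h₂ : A.obj 2 = ModuleCat.of R R)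
    (hα₁ : A.map 1 = eqToHom h₁ ≫ (p • 𝟙 (ModuleCat.of R R)) ≫ eqToHom h₂.symm) :
    ∃ (ι : ∀ i : ℕ, (Rp p n).obj i ⟶ A.obj i) (ρ : ∀ i : ℕ, A.obj i ⟶ (Rp p n).obj i),
      IsSeqHom (Rp p n) A ι ∧ IsSeqHom A (Rp p n) ρ ∧
      (∀ i : ℕ, 1 ≤ i → i ≤ n → ι i ≫ ρ i = 𝟙 ((Rp p n).obj i)) ∧
      ι 1 = eqToHom h₁.symm ∧ ι 2 = eqToHom h₂.symm ∧
      ρ 1 = eqToHom h₁ ∧ ρ 2 = eqToHom h₂ := by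
  classical
  obtain ⟨C, F, hFree, hFin, hcand, hcontr, φ, ⟨hφsq, hφlast⟩, hφiso⟩ := hA
  haveI := hFree
  haveI := hFin
  haveI : Nontrivial R := nontrivial_of_ne p 0 hp
  haveI hC1free := C.free 1 le_rfl (by omega)
  haveI hC1fin := C.fin 1 le_rfl (by omega)
  haveI hC2free := C.free 2 (by omega) (by omega)
  haveI hC2fin := C.fin 2 (by omega) (by omega)
  haveI hiso1 : IsIso (φ 1) := hφiso 1 le_rfl (by omega)
  haveI hiso2 : IsIso (φ 2) := hφiso 2 (by omega) (by omega)
  have hsq1 : (sumSeq C (Fp F p n)).map 1 ≫ φ 2 = φ 1 ≫ A.map 1 := hφsq 1 le_rfl (by omega)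
  -- inverses of the components of φ
  have hginv : ∀ i, 1 ≤ i → i ≤ n →
      ∃ gg : A.obj i ⟶ (sumSeq C (Fp F p n)).obj i, φ i ≫ gg = 𝟙 ((sumSeq C (Fp F p n)).obj i) ∧ gg ≫ φ i = 𝟙 (A.obj i) := by
    intro i hi1 hi2
    haveI := hφiso i hi1 hi2
    exact ⟨inv (φ i), IsIso.hom_inv_id _, IsIso.inv_hom_id _⟩
  choose g hg1 hg2 using hginv
  -- rank bookkeeping
  have hA1rank : Module.finrank R (A.obj 1) = 1 := by
    rw [(eqToIso h₁).toLinearEquiv.finrank_eq]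
    exact Module.finrank_self R
  have hprodrank : Module.finrank R (↑(C.obj 1) × ↑F) = 1 := by
    have he := (asIso (φ 1)).toLinearEquiv.finrank_eq
    rw [hA1rank] at he
    exact he
  have hsumrank : Module.finrank R ↑(C.obj 1) + Module.finrank R ↑F = 1 := by
    rw [← Module.finrank_prod]
    exact hprodrank
  by_cases hF0 : Module.finrank R ↑F = 0
  · -- impossible case: the free part is trivial, so A₁ would be killed by Nakayama
    exfalso
    haveI hFsub : Subsingleton (↑F) := subsingleton_of_finrank_zero (↑F) hF0
    set E : A.obj 1 ⟶ A.obj 2 := eqToHom (h₁.trans h₂.symm) with hE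
    have hmapE : A.map 1 = p • E := by
      rw [hα₁, hE]
      simp only [Linear.smul_comp, Linear.comp_smul, Category.id_comp, eqToHom_trans]
    set i₁ : C.obj 1 ⟶ (sumSeq C (Fp F p n)).obj 1 :=
      ModuleCat.ofHom (LinearMap.prod LinearMap.id (0 : ↑(C.obj 1) →ₗ[R] ↑F)) with hi₁
    set pr₁ : (sumSeq C (Fp F p n)).obj 2 ⟶ C.obj 2 := ModuleCat.ofHom (LinearMap.fst R ↑(C.obj 2) ↑F) with hpr₁
    haveI : IsIso i₁ := by
      refine ⟨ModuleCat.ofHom (LinearMap.fst R ↑(C.obj 1) ↑F), ?_, ?_⟩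
      · ext z; rfl
      · ext z
        show ((z.1 : ↑(C.obj 1)), (0 : ↑F)) = z
        exact Prod.ext rfl (Subsingleton.elim _ _)
    haveI : IsIso pr₁ := by
      refine ⟨ModuleCat.ofHom (LinearMap.prod LinearMap.id (0 : ↑(C.obj 2) →ₗ[R] ↑F)), ?_, ?_⟩
      · ext z
        show ((z.1 : ↑(C.obj 2)), (0 : ↑F)) = z
        exact Prod.ext rfl (Subsingleton.elim _ _)
      · ext z; rfl
    set G : C.obj 1 ⟶ C.obj 2 := i₁ ≫ φ 1 ≫ E ≫ inv (φ 2) ≫ pr₁ with hG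
    haveI : IsIso G := by rw [hG]; infer_instance
    have hCmap1 : C.map 1 = p • G := by
      have h5 : i₁ ≫ (sumSeq C (Fp F p n)).map 1 ≫ pr₁ = C.map 1 := by ext z; rfl
      calc C.map 1 = i₁ ≫ (sumSeq C (Fp F p n)).map 1 ≫ pr₁ := h5.symm
        _ = i₁ ≫ (sumSeq C (Fp F p n)).map 1 ≫ (φ 2 ≫ inv (φ 2)) ≫ pr₁ := by
            rw [IsIso.hom_inv_id, Category.id_comp]
        _ = i₁ ≫ ((sumSeq C (Fp F p n)).map 1 ≫ φ 2) ≫ inv (φ 2) ≫ pr₁ := by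
            simp only [Category.assoc]
        _ = i₁ ≫ (φ 1 ≫ A.map 1) ≫ inv (φ 2) ≫ pr₁ := by rw [hsq1]
        _ = p • G := by
            rw [hmapE, hG]
            simp only [Linear.smul_comp, Linear.comp_smul, Category.assoc]
    set eG := (asIso G).toLinearEquiv with heG
    have hlast_mem : ∀ y : ↑(C.obj n),
        (show ↑(C.obj 1) from C.last y) ∈
          (IsLocalRing.maximalIdeal R) • (⊤ : Submodule R ↑(C.obj 1)) := by
      intro y
      have h0 : C.last ≫ C.map 1 = 0 := hcand.2.2
      have h7 : C.map 1 (C.last y) = 0 := congrArg (fun f => (f y : ↑(C.obj 2))) h0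
      rw [hCmap1] at h7
      have h6 : p • (G (C.last y)) = 0 := h7
      have h8 := mem_smul_of_p_smul_eq_zero (R' := R) hp h6
      have h10 : Submodule.map (eG.symm.toLinearMap)
          ((IsLocalRing.maximalIdeal R) • (⊤ : Submodule R ↑(C.obj 2))) =
          (IsLocalRing.maximalIdeal R) • (⊤ : Submodule R ↑(C.obj 1)) := by
        rw [Submodule.map_smul'', Submodule.map_top, LinearEquiv.range]
      rw [← h10]
      refine Submodule.mem_map.mpr ⟨G (C.last y), h8, ?_⟩
      show eG.symm (G (C.last y)) = C.last y
      rw [show (G (C.last y) : ↑(C.obj 2)) = eG (C.last y) from rfl,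
        LinearEquiv.symm_apply_apply]
    obtain ⟨Θ, Θn, hΘ1, hΘ2, hΘ3⟩ := hcontr
    have hall : (⊤ : Submodule R ↑(C.obj 1)) ≤
        (IsLocalRing.maximalIdeal R) • (⊤ : Submodule R ↑(C.obj 1)) := by
      intro z _
      have hz : z = Θ 1 (C.map 1 z) + C.last (Θn z) :=
        congrArg (fun f : C.obj 1 ⟶ C.obj 1 => (f z : ↑(C.obj 1))) hΘ3
      rw [hz]
      refine Submodule.add_mem _ ?_ (hlast_mem (Θn z))
      rw [hCmap1]
      have hth : Θ 1 ((p • G) z) = p • Θ 1 (G z) := by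
        rw [show ((p • G) z : ↑(C.obj 2)) = p • G z from rfl, map_smul]
      rw [hth]
      exact Submodule.smul_mem_smul
        (by rw [hmax]; exact Ideal.mem_span_singleton_self p) Submodule.mem_top
    have hbot : (⊤ : Submodule R ↑(C.obj 1)) = ⊥ :=
      Submodule.eq_bot_of_le_smul_of_le_jacobson_bot (IsLocalRing.maximalIdeal R) ⊤
        Module.Finite.fg_top hall (IsLocalRing.maximalIdeal_le_jacobson ⊥)
    haveI hsub1 : Subsingleton ↑(C.obj 1) := by
      refine ⟨fun x y => ?_⟩
      have hx := (Submodule.eq_bot_iff _).mp hbot x Submodule.mem_top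
      have hy := (Submodule.eq_bot_iff _).mp hbot y Submodule.mem_top
      rw [hx, hy]
    haveI : Subsingleton (↑(C.obj 1) × ↑F) := inferInstance
    have eqv : (↑(C.obj 1) × ↑F) ≃ₗ[R] R :=
      (asIso (φ 1)).toLinearEquiv.trans (eqToIso h₁).toLinearEquiv
    haveI : Subsingleton R := Equiv.subsingleton eqv.symm.toEquiv
    exact hp (Subsingleton.elim p 0)
  · -- main case: the free part has rank one
    have hF1 : Module.finrank R ↑F = 1 := by omega
    have hcard : Fintype.card (Module.Free.ChooseBasisIndex R ↑F) = 1 := by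
      rw [← Module.finrank_eq_card_chooseBasisIndex, hF1]
    let bF : Module.Basis (Fin 1) R ↑F :=
      (Module.Free.chooseBasis R ↑F).reindex (Fintype.equivFinOfCardEq hcard)
    let u : R ≃ₗ[R] ↑F := (LinearEquiv.funUnique (Fin 1) R R).symm.trans bF.equivFun.symm
    let J : ∀ i : ℕ, ModuleCat.of R R ⟶ (sumSeq C (Fp F p n)).obj i := fun i =>
      ModuleCat.ofHom (LinearMap.prod (0 : R →ₗ[R] ↑(C.obj i)) u.toLinearMap)
    let Q : ∀ i : ℕ, (sumSeq C (Fp F p n)).obj i ⟶ ModuleCat.of R R := fun i =>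
      ModuleCat.ofHom (u.symm.toLinearMap ∘ₗ LinearMap.snd R ↑(C.obj i) ↑F)
    have hJ : ∀ i : ℕ, J i ≫ (sumSeq C (Fp F p n)).map i = p • J (i + 1) := by
      intro i
      refine ModuleCat.hom_ext (LinearMap.ext fun r => ?_)
      show ((C.map i) 0, p • (u r)) = (p • (0 : ↑(C.obj (i+1))), p • (u r))
      rw [map_zero, smul_zero]
    have hJlast : J n ≫ (sumSeq C (Fp F p n)).last = p • J 1 := by
      refine ModuleCat.hom_ext (LinearMap.ext fun r => ?_)
      show ((C.last) 0, p • (u r)) = (p • (0 : ↑(C.obj 1)), p • (u r))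
      rw [map_zero, smul_zero]
    have hQ : ∀ i : ℕ, (sumSeq C (Fp F p n)).map i ≫ Q (i + 1) = p • Q i := by
      intro i
      ext z
      show u.symm (p • z.2) = p • u.symm z.2
      exact map_smul _ _ _
    have hQlast : (sumSeq C (Fp F p n)).last ≫ Q 1 = p • Q n := by
      ext z
      show u.symm (p • z.2) = p • u.symm z.2
      exact map_smul _ _ _
    have hJQ : ∀ i : ℕ, J i ≫ Q i = 𝟙 (ModuleCat.of R R) := by
      intro i
      refine ModuleCat.hom_ext (LinearMap.ext fun r => ?_)
      show u.symm (u r) = r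
      exact u.symm_apply_apply r
    -- fixed range conditions and the inverse maps at 1 and 2
    have hcn1 : (1:ℕ) ≤ 1 ∧ 1 ≤ n := ⟨le_rfl, by omega⟩
    have hcn2 : (1:ℕ) ≤ 2 ∧ 2 ≤ n := ⟨by omega, by omega⟩
    -- the scalars
    obtain ⟨a, ha⟩ : ∃ a : R, J 1 ≫ φ 1 ≫ eqToHom h₁ = a • 𝟙 (ModuleCat.of R R) :=
      ⟨_, hom_RR_eq' _⟩
    obtain ⟨b, hb⟩ : ∃ b : R, J 2 ≫ φ 2 ≫ eqToHom h₂ = b • 𝟙 (ModuleCat.of R R) :=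
      ⟨_, hom_RR_eq' _⟩
    obtain ⟨a', ha'⟩ : ∃ x : R,
        eqToHom h₁.symm ≫ g 1 hcn1.1 hcn1.2 ≫ Q 1 = x • 𝟙 (ModuleCat.of R R) :=
      ⟨_, hom_RR_eq' _⟩
    obtain ⟨b', hb'⟩ : ∃ x : R,
        eqToHom h₂.symm ≫ g 2 hcn2.1 hcn2.2 ≫ Q 2 = x • 𝟙 (ModuleCat.of R R) :=
      ⟨_, hom_RR_eq' _⟩
    have haa' : a * a' = 1 := by
      have hcomp : (J 1 ≫ φ 1 ≫ eqToHom h₁) ≫ (eqToHom h₁.symm ≫ g 1 hcn1.1 hcn1.2 ≫ Q 1)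
          = 𝟙 (ModuleCat.of R R) := by
        simp only [Category.assoc, eqToHom_trans_assoc, eqToHom_refl, Category.id_comp]
        rw [← Category.assoc (φ 1), hg1 1 hcn1.1 hcn1.2, Category.id_comp]
        exact hJQ 1
      rw [ha, ha'] at hcomp
      simp only [Linear.smul_comp, Linear.comp_smul, Category.id_comp, smul_smul] at hcomp
      rw [mul_comm] at hcomp
      exact smul_id_eq_one hcomp
    have hbb' : b * b' = 1 := by
      have hcomp : (J 2 ≫ φ 2 ≫ eqToHom h₂) ≫ (eqToHom h₂.symm ≫ g 2 hcn2.1 hcn2.2 ≫ Q 2)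
          = 𝟙 (ModuleCat.of R R) := by
        simp only [Category.assoc, eqToHom_trans_assoc, eqToHom_refl, Category.id_comp]
        rw [← Category.assoc (φ 2), hg1 2 hcn2.1 hcn2.2, Category.id_comp]
        exact hJQ 2
      rw [hb, hb'] at hcomp
      simp only [Linear.smul_comp, Linear.comp_smul, Category.id_comp, smul_smul] at hcomp
      rw [mul_comm] at hcomp
      exact smul_id_eq_one hcomp
    have hα' : A.map 1 ≫ eqToHom h₂ = p • eqToHom h₁ := by
      rw [hα₁]
      simp only [Category.assoc, eqToHom_trans, eqToHom_refl, Category.comp_id,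
        Linear.smul_comp, Linear.comp_smul, Category.id_comp]
    have l1 : J 1 ≫ (sumSeq C (Fp F p n)).map 1 ≫ φ 2 ≫ eqToHom h₂ = (p * b) • 𝟙 (ModuleCat.of R R) := by
      rw [← Category.assoc (J 1) ((sumSeq C (Fp F p n)).map 1), hJ 1, Linear.smul_comp, hb, smul_smul]
    have l2 : J 1 ≫ φ 1 ≫ A.map 1 ≫ eqToHom h₂ = (p * a) • 𝟙 (ModuleCat.of R R) := by
      rw [hα', Linear.comp_smul, Linear.comp_smul, ha, smul_smul]
    have hmid : J 1 ≫ (sumSeq C (Fp F p n)).map 1 ≫ φ 2 ≫ eqToHom h₂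
        = J 1 ≫ φ 1 ≫ A.map 1 ≫ eqToHom h₂ := by
      rw [← Category.assoc ((sumSeq C (Fp F p n)).map 1) (φ 2), hsq1, Category.assoc]
    have hab : p * b = p * a := smul_id_inj (l1.symm.trans (hmid.trans l2))
    have hpab : p * a' = p * b' := by
      calc p * a' = p * a' * (b * b') := by rw [hbb', mul_one]
        _ = (p * b) * (a' * b') := by ring
        _ = (p * a) * (a' * b') := by rw [hab]
        _ = p * b' * (a * a') := by ring
        _ = p * b' := by rw [haa', mul_one]
    -- the normalising scalars
    set ψ : ℕ → R := fun i => if i = 1 then a' else b' with hψdef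
    set ψ' : ℕ → R := fun i => if i = 1 then a else b with hψ'def
    have hψmul : ∀ i : ℕ, ψ i * ψ' i = 1 := by
      intro i
      simp only [hψdef, hψ'def]
      split_ifs
      · rw [mul_comm]; exact haa'
      · rw [mul_comm]; exact hbb'
    have hpψ : ∀ i j : ℕ, p * ψ i = p * ψ j := by
      intro i j
      simp only [hψdef]
      split_ifs
      · rfl
      · exact hpab
      · exact hpab.symm
      · rfl
    have hpψ' : ∀ i j : ℕ, p * ψ' i = p * ψ' j := by
      intro i j
      simp only [hψ'def]
      split_ifs
      · rfl
      · exact hab.symm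
      · exact hab
      · rfl
    refine ⟨fun i => ψ i • (J i ≫ φ i),
      fun i => if h : 1 ≤ i ∧ i ≤ n then ψ' i • (g i h.1 h.2 ≫ Q i) else 0,
      ⟨?_, ?_⟩, ⟨?_, ?_⟩, ?_, ?_, ?_, ?_, ?_⟩
    · -- squares for ι
      intro i hi1 hi2
      show (p • 𝟙 (ModuleCat.of R R)) ≫ (ψ (i+1) • (J (i+1) ≫ φ (i+1)))
        = (ψ i • (J i ≫ φ i)) ≫ A.map i
      rw [Linear.smul_comp, Linear.comp_smul, Category.id_comp, smul_smul,
        Linear.smul_comp, Category.assoc, ← hφsq i hi1 hi2,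
        ← Category.assoc (J i), hJ i, Linear.smul_comp, smul_smul,
        mul_comm (ψ i) p, hpψ (i+1) i]
    · -- last square for ι
      show (p • 𝟙 (ModuleCat.of R R)) ≫ (ψ 1 • (J 1 ≫ φ 1))
        = (ψ n • (J n ≫ φ n)) ≫ A.last
      rw [Linear.smul_comp, Linear.comp_smul, Category.id_comp, smul_smul,
        Linear.smul_comp, Category.assoc, ← hφlast,
        ← Category.assoc (J n), hJlast, Linear.smul_comp, smul_smul,
        mul_comm (ψ n) p, hpψ 1 n]
    · -- squares for ρ
      intro i hi1 hi2
      have hc1 : 1 ≤ i ∧ i ≤ n := ⟨hi1, by omega⟩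
      have hc2 : 1 ≤ i + 1 ∧ i + 1 ≤ n := ⟨by omega, by omega⟩
      show A.map i ≫ (if h : 1 ≤ i + 1 ∧ i + 1 ≤ n then
          ψ' (i+1) • (g (i+1) h.1 h.2 ≫ Q (i+1)) else 0)
        = (if h : 1 ≤ i ∧ i ≤ n then ψ' i • (g i h.1 h.2 ≫ Q i) else 0)
          ≫ (p • 𝟙 (ModuleCat.of R R))
      rw [dif_pos hc2, dif_pos hc1]
      have hAg : A.map i ≫ g (i+1) hc2.1 hc2.2 = g i hc1.1 hc1.2 ≫ (sumSeq C (Fp F p n)).map i := by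
        calc A.map i ≫ g (i+1) hc2.1 hc2.2
            = (g i hc1.1 hc1.2 ≫ φ i) ≫ A.map i ≫ g (i+1) hc2.1 hc2.2 := by
              rw [hg2 i hc1.1 hc1.2, Category.id_comp]
          _ = g i hc1.1 hc1.2 ≫ (φ i ≫ A.map i) ≫ g (i+1) hc2.1 hc2.2 := by
              simp only [Category.assoc]
          _ = g i hc1.1 hc1.2 ≫ ((sumSeq C (Fp F p n)).map i ≫ φ (i+1)) ≫ g (i+1) hc2.1 hc2.2 := by
              rw [hφsq i hi1 hi2]
          _ = g i hc1.1 hc1.2 ≫ (sumSeq C (Fp F p n)).map i ≫ (φ (i+1) ≫ g (i+1) hc2.1 hc2.2) := by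
              simp only [Category.assoc]
          _ = g i hc1.1 hc1.2 ≫ (sumSeq C (Fp F p n)).map i := by
              rw [hg1 (i+1) hc2.1 hc2.2, Category.comp_id]
      rw [Linear.comp_smul, ← Category.assoc, hAg, Category.assoc, hQ i,
        Linear.comp_smul, smul_smul, Linear.smul_comp, Linear.comp_smul,
        Category.comp_id, smul_smul, mul_comm (ψ' (i+1)) p, mul_comm (ψ' i) p, hpψ' (i+1) i]
    · -- last square for ρ
      have hc1 : 1 ≤ 1 ∧ 1 ≤ n := ⟨le_rfl, by omega⟩
      have hcn : 1 ≤ n ∧ n ≤ n := ⟨by omega, le_rfl⟩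
      show A.last ≫ (if h : 1 ≤ 1 ∧ 1 ≤ n then ψ' 1 • (g 1 h.1 h.2 ≫ Q 1) else 0)
        = (if h : 1 ≤ n ∧ n ≤ n then ψ' n • (g n h.1 h.2 ≫ Q n) else 0)
          ≫ (p • 𝟙 (ModuleCat.of R R))
      rw [dif_pos hc1, dif_pos hcn]
      have hAg : A.last ≫ g 1 hc1.1 hc1.2 = g n hcn.1 hcn.2 ≫ (sumSeq C (Fp F p n)).last := by
        calc A.last ≫ g 1 hc1.1 hc1.2
            = (g n hcn.1 hcn.2 ≫ φ n) ≫ A.last ≫ g 1 hc1.1 hc1.2 := by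
              rw [hg2 n hcn.1 hcn.2, Category.id_comp]
          _ = g n hcn.1 hcn.2 ≫ (φ n ≫ A.last) ≫ g 1 hc1.1 hc1.2 := by
              simp only [Category.assoc]
          _ = g n hcn.1 hcn.2 ≫ ((sumSeq C (Fp F p n)).last ≫ φ 1) ≫ g 1 hc1.1 hc1.2 := by
              rw [hφlast]
          _ = g n hcn.1 hcn.2 ≫ (sumSeq C (Fp F p n)).last ≫ (φ 1 ≫ g 1 hc1.1 hc1.2) := by
              simp only [Category.assoc]
          _ = g n hcn.1 hcn.2 ≫ (sumSeq C (Fp F p n)).last := by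
              rw [hg1 1 hc1.1 hc1.2, Category.comp_id]
      rw [Linear.comp_smul, ← Category.assoc, hAg, Category.assoc, hQlast,
        Linear.comp_smul, smul_smul, Linear.smul_comp, Linear.comp_smul,
        Category.comp_id, smul_smul, mul_comm (ψ' 1) p, mul_comm (ψ' n) p, hpψ' 1 n]
    · -- splitting
      intro i hi1 hi2
      have hc : 1 ≤ i ∧ i ≤ n := ⟨hi1, hi2⟩
      show (ψ i • (J i ≫ φ i)) ≫ (if h : 1 ≤ i ∧ i ≤ n then
          ψ' i • (g i h.1 h.2 ≫ Q i) else 0) = 𝟙 (ModuleCat.of R R)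
      rw [dif_pos hc, Linear.smul_comp, Linear.comp_smul, smul_smul,
        Category.assoc, ← Category.assoc (φ i), hg1 i hc.1 hc.2, Category.id_comp,
        hJQ i, hψmul i, one_smul]
    · -- ι 1
      show ψ 1 • (J 1 ≫ φ 1) = eqToHom h₁.symm
      have hJφ1 : J 1 ≫ φ 1 = a • eqToHom h₁.symm := by
        have h11 := congrArg (fun f => f ≫ eqToHom h₁.symm) ha
        simpa only [Category.assoc, eqToHom_trans, eqToHom_refl, Category.comp_id,
          Linear.smul_comp, Category.id_comp] using h11
      have hψ1 : ψ 1 = a' := by simp [hψdef]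
      rw [hJφ1, hψ1, smul_smul, mul_comm a' a, haa', one_smul]
    · -- ι 2
      show ψ 2 • (J 2 ≫ φ 2) = eqToHom h₂.symm
      have hJφ2 : J 2 ≫ φ 2 = b • eqToHom h₂.symm := by
        have h11 := congrArg (fun f => f ≫ eqToHom h₂.symm) hb
        simpa only [Category.assoc, eqToHom_trans, eqToHom_refl, Category.comp_id,
          Linear.smul_comp, Category.id_comp] using h11
      have hψ2 : ψ 2 = b' := by simp [hψdef]
      rw [hJφ2, hψ2, smul_smul, mul_comm b' b, hbb', one_smul]
    · -- ρ 1
      show (if h : 1 ≤ 1 ∧ 1 ≤ n then ψ' 1 • (g 1 h.1 h.2 ≫ Q 1) else 0) = eqToHom h₁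
      rw [dif_pos hcn1]
      have hgQ1 : g 1 hcn1.1 hcn1.2 ≫ Q 1 = a' • eqToHom h₁ := by
        have h11 := congrArg (fun f => eqToHom h₁ ≫ f) ha'
        simpa only [eqToHom_trans_assoc, eqToHom_refl, Category.id_comp,
          Linear.comp_smul, Category.comp_id] using h11
      have hψ1 : ψ' 1 = a := by simp [hψ'def]
      rw [hgQ1, hψ1, smul_smul, haa', one_smul]
    · -- ρ 2
      show (if h : 1 ≤ 2 ∧ 2 ≤ n then ψ' 2 • (g 2 h.1 h.2 ≫ Q 2) else 0) = eqToHom h₂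
      rw [dif_pos hcn2]
      have hgQ2 : g 2 hcn2.1 hcn2.2 ≫ Q 2 = b' • eqToHom h₂ := by
        have h11 := congrArg (fun f => eqToHom h₂ ≫ f) hb'
        simpa only [eqToHom_trans_assoc, eqToHom_refl, Category.id_comp,
          Linear.comp_smul, Category.comp_id] using h11
      have hψ2 : ψ' 2 = b := by simp [hψ'def]
      rw [hgQ2, hψ2, smul_smul, hbb', one_smul]
end

section
/- Let A_• be an n-angle (an element of 𝒩) with A₁ = A₂ = R and first structure map α₁ = p·1_R. Then there exist a finitely generated free R-module M and an isomorphism ψ : A₃ → R ⊕ M of R-modules such that ψ∘α₂ equals the map R → R ⊕ M given by x ↦ (p·x, 0); in other words, up to isomorphism of n-angles fixing A₁ and A₂, the second structure map α₂ is (p, 0)ᵀ : R → R ⊕ M. -/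
open CategoryTheory CategoryTheory.Limits

universe u

variable (R : Type u) [CommRing R]

variable {R}

section Aux
variable {R : Type u} [CommRing R] [IsLocalRing R] {p : R}

lemma p_mem_max' (hmax : IsLocalRing.maximalIdeal R = Ideal.span {p}) :
    p ∈ IsLocalRing.maximalIdeal R := by
  rw [hmax]; exact Ideal.mem_span_singleton_self p

lemma p_not_unit' (hmax : IsLocalRing.maximalIdeal R = Ideal.span {p}) : ¬ IsUnit p := by
  have := p_mem_max' hmax
  rw [IsLocalRing.mem_maximalIdeal, mem_nonunits_iff] at this
  exact this

lemma pp_zero' (hmax : IsLocalRing.maximalIdeal R = Ideal.span {p})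
    (hsq : IsLocalRing.maximalIdeal R ^ 2 = ⊥) : p * p = 0 := by
  have : p * p ∈ IsLocalRing.maximalIdeal R ^ 2 := by
    rw [pow_two]; exact Ideal.mul_mem_mul (p_mem_max' hmax) (p_mem_max' hmax)
  rwa [hsq, Ideal.mem_bot] at this

lemma one_ne_p_mul' (hmax : IsLocalRing.maximalIdeal R = Ideal.span {p}) (t : R) :
    p * t ≠ 1 := fun h => p_not_unit' hmax (IsUnit.of_mul_eq_one t h)

lemma not_unit_imp' (hmax : IsLocalRing.maximalIdeal R = Ideal.span {p}) {a : R}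
    (h : ¬ IsUnit a) : ∃ b, a = p * b := by
  have : a ∈ IsLocalRing.maximalIdeal R := h
  rw [hmax, Ideal.mem_span_singleton] at this
  exact this

lemma ann_p' (hp : p ≠ 0) (hmax : IsLocalRing.maximalIdeal R = Ideal.span {p}) {a : R}
    (ha : p * a = 0) : ∃ b, a = p * b := by
  by_cases h : IsUnit a
  · obtain ⟨u, rfl⟩ := h
    have : p = (p * (u : R)) * ((u⁻¹ : Rˣ) : R) := by
      rw [mul_assoc, ← Units.val_mul, mul_inv_cancel, Units.val_one, mul_one]
    rw [ha, zero_mul] at this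
    exact absurd this hp
  · exact not_unit_imp' hmax h

lemma coords_to_smul' {N : Type u} [AddCommGroup N] [Module R N]
    [Module.Free R N] [Module.Finite R N] (x : N)
    (h : ∀ i, ∃ c, (Module.Free.chooseBasis R N).repr x i = p * c) :
    ∃ y, x = p • y := by
  classical
  set b := Module.Free.chooseBasis R N with hb
  choose c hc using h
  refine ⟨b.repr.symm (Finsupp.equivFunOnFinite.symm c), ?_⟩
  apply b.repr.injective
  ext i
  rw [map_smul, LinearEquiv.apply_symm_apply, Finsupp.smul_apply, hc i]
  simp [smul_eq_mul]

lemma smul_of_ann' (hp : p ≠ 0) (hmax : IsLocalRing.maximalIdeal R = Ideal.span {p})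
    {N : Type u} [AddCommGroup N] [Module R N] [Module.Free R N] [Module.Finite R N]
    {x : N} (hx : p • x = 0) : ∃ y, x = p • y := by
  refine coords_to_smul' x (fun i => ann_p' hp hmax ?_)
  have := congrArg (fun z => (Module.Free.chooseBasis R N).repr z i) hx
  simpa [smul_eq_mul] using this

lemma smul_or_unim' (hmax : IsLocalRing.maximalIdeal R = Ideal.span {p})
    {N : Type u} [AddCommGroup N] [Module R N] [Module.Free R N] [Module.Finite R N]
    (x : N) : (∃ y, x = p • y) ∨ ∃ g : N →ₗ[R] R, g x = 1 := by
  classical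
  set b := Module.Free.chooseBasis R N with hb
  by_cases h : ∃ i, IsUnit (b.repr x i)
  · obtain ⟨i, u, hu⟩ := h
    right
    refine ⟨((u⁻¹ : Rˣ) : R) • (b.coord i), ?_⟩
    rw [LinearMap.smul_apply, Module.Basis.coord_apply, ← hu, smul_eq_mul, Units.inv_mul]
  · left
    push_neg at h
    exact coords_to_smul' x (fun i => not_unit_imp' hmax (h i))

end Aux


/-- If `A_•` is an `n`-angle with `A₁ = A₂ = R` and first structure map
`α₁ = p · 1_R`, then there are a finitely generated free module `M` and an isomorphism
`ψ : A₃ ≅ R ⊕ M` under which the second structure map `α₂` becomes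
`(p, 0)ᵀ : R → R ⊕ M`, `x ↦ (p·x, 0)`. -/
theorem second_map_of_base_p
    {R : Type u} [CommRing R] [IsLocalRing R] (p : R) (hp : p ≠ 0)
    (hmax : IsLocalRing.maximalIdeal R = Ideal.span {p})
    (hsq : IsLocalRing.maximalIdeal R ^ 2 = ⊥)
    (n : ℕ) (hn : 3 ≤ n) (hpar : Even n ∨ 2 * p = 0)
    (A : NSeqMod R n) (hA : MemN p A)
    (h₁ : A.obj 1 = ModuleCat.of R R) (h₂ : A.obj 2 = ModuleCat.of R R)
    (hα₁ : A.map 1 = eqToHom h₁ ≫ (p • 𝟙 (ModuleCat.of R R)) ≫ eqToHom h₂.symm) :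
    ∃ (M : ModuleCat.{u} R) (_ : Module.Free R M) (_ : Module.Finite R M)
      (ψ : A.obj 3 ⟶ ModuleCat.of R (R × M)),
      IsIso ψ ∧
      A.map 2 ≫ ψ =
        eqToHom h₂ ≫ ModuleCat.ofHom (LinearMap.prod (LinearMap.lsmul R R p)
          (0 : R →ₗ[R] M)) := by
  
  classical
  obtain ⟨Cs, F, hF1, hF2, hCand, hContr, φ, ⟨hsqr, -⟩, hiso⟩ := hA
  haveI : Module.Free R F := hF1
  haveI : Module.Finite R F := hF2
  haveI : Module.Free R (Cs.obj 3) := Cs.free 3 (by omega) (by omega)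
  haveI : Module.Finite R (Cs.obj 3) := Cs.fin 3 (by omega) (by omega)
  haveI i1 : IsIso (φ 1) := hiso 1 (by omega) (by omega)
  haveI i2 : IsIso (φ 2) := hiso 2 (by omega) (by omega)
  haveI i3 : IsIso (φ 3) := hiso 3 (by omega) (by omega)
  have hα₁c : A.map 1 = p • (eqToHom (h₁.trans h₂.symm) : A.obj 1 ⟶ A.obj 2) := by
    rw [hα₁]
    simp only [CategoryTheory.Linear.smul_comp, CategoryTheory.Linear.comp_smul,
      Category.id_comp, Category.comp_id, eqToHom_trans]
  -- structure maps of the direct sum, as linear maps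
  set bm1 : (Cs.obj 1 × F) →ₗ[R] (Cs.obj 2 × F) := ((sumSeq Cs (Fp F p n)).map 1).hom with hbm1def
  set bm2 : (Cs.obj 2 × F) →ₗ[R] (Cs.obj 3 × F) := ((sumSeq Cs (Fp F p n)).map 2).hom with hbm2def
  have hbm1 : ∀ z : Cs.obj 1 × F, bm1 z = ((Cs.map 1).hom z.1, p • z.2) := fun z => rfl
  have hbm2 : ∀ z : Cs.obj 2 × F, bm2 z = ((Cs.map 2).hom z.1, p • z.2) := fun z => rfl
  -- the components of the isomorphism, as linear maps
  set ψ1 : (Cs.obj 1 × F) →ₗ[R] A.obj 1 := (φ 1).hom with hψ1def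
  set ψ2 : (Cs.obj 2 × F) →ₗ[R] A.obj 2 := (φ 2).hom with hψ2def
  set ψ3 : (Cs.obj 3 × F) →ₗ[R] A.obj 3 := (φ 3).hom with hψ3def
  set χ1 : A.obj 1 →ₗ[R] (Cs.obj 1 × F) := (inv (φ 1)).hom with hχ1def
  set χ2 : A.obj 2 →ₗ[R] (Cs.obj 2 × F) := (inv (φ 2)).hom with hχ2def
  set χ3 : A.obj 3 →ₗ[R] (Cs.obj 3 × F) := (inv (φ 3)).hom with hχ3def
  have hχψ2 : ∀ x, χ2 (ψ2 x) = x := fun x =>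
    DFunLike.congr_fun (congrArg ModuleCat.Hom.hom (IsIso.hom_inv_id (φ 2)) : χ2.comp ψ2 = LinearMap.id) x
  have hψχ1 : ∀ x, ψ1 (χ1 x) = x := fun x =>
    DFunLike.congr_fun (congrArg ModuleCat.Hom.hom (IsIso.inv_hom_id (φ 1)) : ψ1.comp χ1 = LinearMap.id) x
  have hψχ2 : ∀ x, ψ2 (χ2 x) = x := fun x =>
    DFunLike.congr_fun (congrArg ModuleCat.Hom.hom (IsIso.inv_hom_id (φ 2)) : ψ2.comp χ2 = LinearMap.id) x
  have hχψ3 : ∀ x, χ3 (ψ3 x) = x := fun x =>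
    DFunLike.congr_fun (congrArg ModuleCat.Hom.hom (IsIso.hom_inv_id (φ 3)) : χ3.comp ψ3 = LinearMap.id) x
  have inj2 : Function.Injective ψ2 := fun a b h => by
    rw [← hχψ2 a, h, hχψ2 b]
  -- the structure maps of A, as linear maps
  set am1 : (A.obj 1 : Type u) →ₗ[R] A.obj 2 := (A.map 1).hom with ham1def
  set am2 : (A.obj 2 : Type u) →ₗ[R] A.obj 3 := (A.map 2).hom with ham2def
  -- the identifications, as linear maps
  set E : (A.obj 1 : Type u) →ₗ[R] A.obj 2 :=
    (eqToHom (h₁.trans h₂.symm) : A.obj 1 ⟶ A.obj 2).hom with hEdef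
  set ε : R →ₗ[R] A.obj 2 := (eqToHom h₂.symm : ModuleCat.of R R ⟶ A.obj 2).hom with hεdef
  set ε₁ : R →ₗ[R] A.obj 1 := (eqToHom h₁.symm : ModuleCat.of R R ⟶ A.obj 1).hom with hε₁def
  set εi : (A.obj 2 : Type u) →ₗ[R] R := (eqToHom h₂ : A.obj 2 ⟶ ModuleCat.of R R).hom with hεidef
  have hα₁' : am1 = p • E := congrArg ModuleCat.Hom.hom hα₁c
  have hEε₁ : E.comp ε₁ = ε := congrArg ModuleCat.Hom.hom (eqToHom_trans (C := ModuleCat.{u} R) h₁.symm (h₁.trans h₂.symm))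
  have hεεi : εi.comp ε = LinearMap.id := by
    have h8 : (eqToHom h₂.symm : ModuleCat.of R R ⟶ A.obj 2) ≫ eqToHom h₂ =
        𝟙 (ModuleCat.of R R) := by rw [eqToHom_trans, eqToHom_refl]
    exact congrArg ModuleCat.Hom.hom h8
  -- the commuting squares, as linear maps
  have sq1 : ψ2.comp bm1 = am1.comp ψ1 := congrArg ModuleCat.Hom.hom (hsqr 1 (by omega) (by omega))
  have sq2 : ψ3.comp bm2 = am2.comp ψ2 := congrArg ModuleCat.Hom.hom (hsqr 2 (by omega) (by omega))
  have sq1' : ∀ z, ψ2 (bm1 z) = am1 (ψ1 z) := fun z => DFunLike.congr_fun sq1 z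
  have sq2' : ∀ z, ψ3 (bm2 z) = am2 (ψ2 z) := fun z => DFunLike.congr_fun sq2 z
  -- the image of γ₁ is contained in p • C₂
  have hγ₁ : ∀ t : Cs.obj 1, ∃ s : Cs.obj 2, (Cs.map 1).hom t = p • s := by
    intro t
    have h1 : ψ2 (bm1 (t, 0)) = p • (E (ψ1 (t, 0))) := by
      rw [sq1' (t, 0), hα₁']; rfl
    have h2 : bm1 (t, 0) = p • (χ2 (E (ψ1 (t, 0)))) := by
      apply inj2
      rw [map_smul, hψχ2, h1]
    refine ⟨(χ2 (E (ψ1 (t, 0)))).1, ?_⟩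
    have h3 := congrArg Prod.fst (h2.symm.trans (hbm1 (t, 0)))
    simp only [Prod.smul_fst] at h3
    exact h3.symm
  set u₂ : Cs.obj 2 × F := χ2 (ε 1) with hu₂def
  set c : Cs.obj 2 := u₂.1 with hcdef
  set f : F := u₂.2 with hfdef
  have hu₂eq : u₂ = (c, f) := rfl
  -- p • u₂ is in the image of bm1
  have hpu₂ : bm1 (χ1 (ε₁ 1)) = p • u₂ := by
    apply inj2
    rw [sq1' _, hψχ1, hα₁', map_smul, hu₂def, hψχ2]
    show p • E (ε₁ 1) = p • ε 1
    rw [← hEε₁]; rfl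
  have hpc : (Cs.map 1).hom ((χ1 (ε₁ 1)).1) = p • c := by
    have h3 := congrArg Prod.fst ((hbm1 (χ1 (ε₁ 1))).symm.trans hpu₂)
    simpa using h3
  -- p • γ₂ c = 0
  have hpγ₂c : p • (Cs.map 2).hom c = 0 := by
    rw [← map_smul, ← hpc]
    have h0 : Cs.map 1 ≫ Cs.map 2 = 0 := hCand.1 1 (by omega) (by omega)
    have h0' : (Cs.map 2).hom.comp
        (Cs.map 1).hom = 0 := congrArg ModuleCat.Hom.hom h0
    exact DFunLike.congr_fun h0' _
  obtain ⟨v, hv⟩ : ∃ v, (Cs.map 2).hom c = p • v := smul_of_ann' hp hmax hpγ₂c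
  set w' : Cs.obj 3 × F := (v, f) with hw'def
  -- the second structure map applied to 1
  have hβ : am2 (ε 1) = p • (ψ3 w') := by
    have h2 : bm2 u₂ = p • w' := by
      rw [hbm2 u₂, hu₂eq]
      show ((Cs.map 2).hom c, p • f) = p • ((v, f) : Cs.obj 3 × F)
      rw [Prod.smul_mk, hv]
    have h1 : ψ3 (bm2 u₂) = am2 (ψ2 u₂) := sq2' u₂
    rw [h2, map_smul] at h1
    rw [h1, hu₂def, hψχ2]
  -- unimodularity of w'
  have hunim : ∃ g3 : (A.obj 3 : Type u) →ₗ[R] R, g3 (ψ3 w') = 1 := by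
    have lift : ∀ g' : (Cs.obj 3 × F) →ₗ[R] R, g' w' = 1 →
        ∃ g3 : (A.obj 3 : Type u) →ₗ[R] R, g3 (ψ3 w') = 1 := by
      intro g' hg'
      exact ⟨g'.comp χ3, by rw [LinearMap.comp_apply, hχψ3, hg']⟩
    rcases smul_or_unim' hmax f with ⟨f₀, hf₀⟩ | ⟨gF, hgF⟩
    · rcases smul_or_unim' hmax v with ⟨v₀, hv₀⟩ | ⟨gC, hgC⟩
      · -- contradiction case : u₂ would be divisible by p, yet it maps to 1
        exfalso
        have hγ₂c0 : (Cs.map 2).hom c = 0 := by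
          rw [hv, hv₀, smul_smul, pp_zero' hmax hsq, zero_smul]
        obtain ⟨Θ, Θn, hc1, hc2, hc3⟩ := hContr
        have hco : 𝟙 (Cs.obj 2) = Cs.map 2 ≫ Θ 2 + Θ 1 ≫ Cs.map 1 :=
          hc1 1 (by omega) (by omega)
        have hco' : (LinearMap.id : (Cs.obj 2 : Type u) →ₗ[R] Cs.obj 2) =
            ((Θ 2).hom.comp
              (Cs.map 2).hom) +
            ((Cs.map 1).hom.comp
              (Θ 1).hom) := congrArg ModuleCat.Hom.hom hco
        have hcc : c = (Cs.map 1).hom ((Θ 1).hom c) := by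
          have h6 := DFunLike.congr_fun hco' c
          rw [LinearMap.id_apply, LinearMap.add_apply, LinearMap.comp_apply,
            LinearMap.comp_apply, hγ₂c0, map_zero, zero_add] at h6
          exact h6
        obtain ⟨s, hs⟩ := hγ₁ ((Θ 1).hom c)
        have hcu : u₂ = p • ((s, f₀) : Cs.obj 2 × F) := by
          rw [hu₂eq, Prod.smul_mk]
          exact Prod.ext (by rw [hcc, hs]) hf₀
        have h7 : (1 : R) = εi (ψ2 u₂) := by
          rw [hu₂def, hψχ2]
          exact (DFunLike.congr_fun hεεi (1 : R)).symm
        rw [hcu, map_smul, map_smul, smul_eq_mul] at h7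
        exact one_ne_p_mul' hmax _ h7.symm
      · refine lift (gC.comp (LinearMap.fst R (Cs.obj 3) F)) ?_
        rw [LinearMap.comp_apply]
        exact hgC
    · refine lift (gF.comp (LinearMap.snd R (Cs.obj 3) F)) ?_
      rw [LinearMap.comp_apply]
      exact hgF
  obtain ⟨g, hg⟩ := hunim
  set w : (A.obj 3 : Type u) := ψ3 w' with hwdef
  -- now build M and ψ
  haveI : Module.Free R (A.obj 3) := A.free 3 (by omega) (by omega)
  haveI : Module.Finite R (A.obj 3) := A.fin 3 (by omega) (by omega)
  set K := LinearMap.ker g with hK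
  have hker : ∀ x : A.obj 3, x - g x • w ∈ K := by
    intro x
    simp [hK, LinearMap.mem_ker, map_sub, map_smul, hg, smul_eq_mul]
  set π : (A.obj 3 : Type u) →ₗ[R] K := LinearMap.codRestrict K
    (LinearMap.id - g.smulRight w) (fun x => hker x) with hπ
  have hπ_apply : ∀ x : A.obj 3, (π x : A.obj 3) = x - g x • w := fun x => rfl
  have hπ_surj : Function.Surjective π := by
    intro m
    refine ⟨(m : A.obj 3), Subtype.ext ?_⟩
    rw [hπ_apply, m.2, zero_smul, sub_zero]
  have hsplit : π.comp K.subtype = LinearMap.id := by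
    ext m
    rw [LinearMap.comp_apply, LinearMap.id_apply]
    rw [hπ_apply, Submodule.coe_subtype, m.2, zero_smul, sub_zero]
  haveI hKfin : Module.Finite R K := Module.Finite.of_surjective π hπ_surj
  haveI : Module.Projective R K := Module.Projective.of_split K.subtype π hsplit
  haveI : Module.FinitePresentation R K := Module.finitePresentation_of_projective R K
  haveI hKfree : Module.Free R K := Module.free_of_flat_of_isLocalRing
  refine ⟨ModuleCat.of R K, hKfree, hKfin,
    ModuleCat.ofHom (LinearMap.prod g π), ?_, ?_⟩
  · refine ⟨ModuleCat.ofHom (LinearMap.coprod (LinearMap.toSpanSingleton R _ w) K.subtype),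
      ?_, ?_⟩
    · apply ModuleCat.hom_ext
      show ((LinearMap.coprod (LinearMap.toSpanSingleton R _ w) K.subtype).comp
        (LinearMap.prod g π) : (A.obj 3 : Type u) →ₗ[R] A.obj 3) = LinearMap.id
      apply LinearMap.ext
      intro x
      rw [LinearMap.comp_apply, LinearMap.id_apply, LinearMap.prod_apply, Function.prod,
        LinearMap.coprod_apply, LinearMap.toSpanSingleton_apply, Submodule.coe_subtype,
        hπ_apply]
      abel
    · apply ModuleCat.hom_ext
      show ((LinearMap.prod g π).comp
        (LinearMap.coprod (LinearMap.toSpanSingleton R _ w) K.subtype) :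
          (R × K) →ₗ[R] (R × K)) = LinearMap.id
      apply LinearMap.ext
      rintro ⟨r, m⟩
      rw [LinearMap.comp_apply, LinearMap.id_apply, LinearMap.coprod_apply,
        LinearMap.toSpanSingleton_apply, Submodule.coe_subtype, LinearMap.prod_apply, Function.prod]
      have hgm : g (m : A.obj 3) = 0 := m.2
      have h1 : g (r • w + (m : A.obj 3)) = r := by
        rw [map_add, map_smul, hg, hgm, add_zero, smul_eq_mul, mul_one]
      refine Prod.ext h1 ?_
      refine Subtype.ext ?_
      rw [hπ_apply, h1]
      abel
  · rw [← cancel_epi (eqToHom h₂.symm : ModuleCat.of R R ⟶ A.obj 2)]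
    have hrhs : (eqToHom h₂.symm : ModuleCat.of R R ⟶ A.obj 2) ≫ eqToHom h₂ ≫
        ModuleCat.ofHom (LinearMap.prod (LinearMap.lsmul R R p) (0 : R →ₗ[R] K)) =
        ModuleCat.ofHom (LinearMap.prod (LinearMap.lsmul R R p) (0 : R →ₗ[R] K)) := by
      rw [← Category.assoc, eqToHom_trans, eqToHom_refl, Category.id_comp]
    rw [hrhs]
    apply ModuleCat.hom_ext
    show ((LinearMap.prod g π).comp (am2.comp ε) : R →ₗ[R] (R × K)) =
      LinearMap.prod (LinearMap.lsmul R R p) (0 : R →ₗ[R] K)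
    apply LinearMap.ext_ring
    rw [LinearMap.comp_apply, LinearMap.comp_apply, hβ, map_smul, LinearMap.prod_apply,
      LinearMap.prod_apply, Function.prod, Function.prod, hg]
    have hπw : π w = 0 := by
      refine Subtype.ext ?_
      rw [hπ_apply, hg, one_smul, sub_self]
      rfl
    rw [hπw, Prod.smul_mk, smul_zero]
    refine Prod.ext ?_ rfl
    show p * 1 = LinearMap.lsmul R R p 1
    rw [LinearMap.lsmul_apply, smul_eq_mul, mul_one]
end

section
/- In the derived category D(ℤ), for every integer n ≥ 2, the morphism of distinguished triangles from ℤ →n→ ℤ →qₙ→ ℤ/n →εₙ→ ℤ[1] to its rotation ℤ →qₙ→ ℤ/n →εₙ→ ℤ[1] →−n→ ℤ[1] with components φ₁ = 0 : ℤ → ℤ, φ₂ = 0 : ℤ → ℤ/n, φ₃ = εₙ : ℤ/n → ℤ[1] (and fourth component Σφ₁ = 0) is a morphism of distinguished triangles that is not middling good. -/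
open CategoryTheory CategoryTheory.Limits CategoryTheory.Pretriangulated

universe v u

/-- A morphism `ψ : T₁ ⟶ T₂` of (distinguished) triangles is *middling good* if it extends to
a `4 × 4` diagram whose first three rows (`T₁`, `T₂` and a third triangle `T₃`) and first
three columns are distinguished triangles, whose fourth row and column are the shifts of the
first row and column, and in which all squares commute except the bottom-right corner square,
which anticommutes. -/
def MiddlingGood {D : Type u} [Category.{v} D] [Preadditive D] [HasZeroObject D]
    [HasShift D ℤ] [∀ k : ℤ, (shiftFunctor D k).Additive] [Pretriangulated D]
    {T₁ T₂ : Triangle D} (ψ : T₁ ⟶ T₂) : Prop :=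
  ∃ (T₃ : Triangle D) (_ : T₃ ∈ distTriang D)
    (a : T₂.obj₁ ⟶ T₃.obj₁) (b : T₂.obj₂ ⟶ T₃.obj₂) (c : T₂.obj₃ ⟶ T₃.obj₃)
    (a' : T₃.obj₁ ⟶ T₁.obj₁⟦(1 : ℤ)⟧) (b' : T₃.obj₂ ⟶ T₁.obj₂⟦(1 : ℤ)⟧)
    (c' : T₃.obj₃ ⟶ T₁.obj₃⟦(1 : ℤ)⟧),
    -- the three columns are distinguished triangles
    (Triangle.mk ψ.hom₁ a a' ∈ distTriang D) ∧
    (Triangle.mk ψ.hom₂ b b' ∈ distTriang D) ∧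
    (Triangle.mk ψ.hom₃ c c' ∈ distTriang D) ∧
    -- the squares between the second and third rows commute
    T₂.mor₁ ≫ b = a ≫ T₃.mor₁ ∧
    T₂.mor₂ ≫ c = b ≫ T₃.mor₂ ∧
    T₂.mor₃ ≫ (shiftFunctor D (1 : ℤ)).map a = c ≫ T₃.mor₃ ∧
    -- the squares between the third and fourth rows commute, except the corner square,
    -- which anticommutes
    T₃.mor₁ ≫ b' = a' ≫ (shiftFunctor D (1 : ℤ)).map T₁.mor₁ ∧
    T₃.mor₂ ≫ c' = b' ≫ (shiftFunctor D (1 : ℤ)).map T₁.mor₂ ∧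
    T₃.mor₃ ≫ (shiftFunctor D (1 : ℤ)).map a' =
      -(c' ≫ (shiftFunctor D (1 : ℤ)).map T₁.mor₃)

/-- Master algebra lemma: there is no "long exact sequence" configuration
`ℤ →·n→ ℤ →u→ ℤ →∂→ ℤ →q→ ℤ/n`. -/
lemma master_contradiction (n : ℕ) (hn : 2 ≤ n) {G₁ G₂ G₃ A B : Type}
    [AddCommGroup G₁] [AddCommGroup G₂] [AddCommGroup G₃] [AddCommGroup A] [AddCommGroup B]
    (f : G₁ →+ G₂) (g : G₂ →+ G₃) (d : G₃ →+ A) (m : A →+ B)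
    (α : G₁ →+ ℤ) (β : G₂ →+ ℤ) (γ : G₃ →+ ℤ)
    (eA : A →+ ℤ) (eB : B →+ ZMod n)
    (hβ : Function.Bijective β) (hγ : Function.Bijective γ)
    (hA : Function.Bijective eA) (hB : Function.Injective eB)
    (hf : ∀ x, β (f x) = (n : ℤ) * α x)
    (hm : ∀ x, eB (m x) = ((eA x : ℤ) : ZMod n))
    (ex1 : ∀ x₂, g x₂ = 0 → ∃ x₁, f x₁ = x₂)
    (hgd : ∀ x₂, d (g x₂) = 0)
    (ex3 : ∀ a, m a = 0 → ∃ x₃, d x₃ = a) :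
    False := by
  classical
  let Eγ : G₃ ≃+ ℤ := AddEquiv.ofBijective γ hγ
  let EA : A ≃+ ℤ := AddEquiv.ofBijective eA hA
  let Eβ : G₂ ≃+ ℤ := AddEquiv.ofBijective β hβ
  let Φ : ℤ →+ ℤ := eA.comp (d.comp Eγ.symm.toAddMonoidHom)
  set c : ℤ := Φ 1 with hc
  have hΦ : ∀ k : ℤ, Φ k = k * c := by
    intro k
    have : Φ k = Φ (k • (1 : ℤ)) := by norm_num
    rw [this, map_zsmul, smul_eq_mul, hc]
  have hsymm : ∀ x₃ : G₃, Eγ.symm (γ x₃) = x₃ := fun x₃ => Eγ.symm_apply_apply x₃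
  have hd : ∀ x₃ : G₃, eA (d x₃) = γ x₃ * c := by
    intro x₃
    have h2 := hΦ (γ x₃)
    simpa [Φ, hsymm x₃] using h2
  have hEAsymm : eA (EA.symm (n : ℤ)) = (n : ℤ) := EA.apply_symm_apply _
  have hma : m (EA.symm (n : ℤ)) = 0 := by
    apply hB
    rw [hm, map_zero, hEAsymm]
    norm_num
  obtain ⟨x₃, hx₃⟩ := ex3 _ hma
  have hcn : γ x₃ * c = (n : ℤ) := by rw [← hd, hx₃, hEAsymm]
  have hc0 : c ≠ 0 := by
    intro h
    rw [h, mul_zero] at hcn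
    have : (n : ℤ) ≠ 0 := by exact_mod_cast (by omega : n ≠ 0)
    exact this hcn.symm
  have hdinj : ∀ x₃ : G₃, d x₃ = 0 → x₃ = 0 := by
    intro y h
    have h1 : γ y * c = 0 := by rw [← hd, h, map_zero]
    have hγ0 : γ y = 0 := by
      rcases mul_eq_zero.1 h1 with h' | h'
      · exact h'
      · exact absurd h' hc0
    exact hγ.1 (by rw [hγ0, map_zero])
  have hg0 : ∀ x₂, g x₂ = 0 := fun x₂ => hdinj _ (hgd x₂)
  obtain ⟨x₁, hx₁⟩ := ex1 (Eβ.symm 1) (hg0 _)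
  have h1 : (1 : ℤ) = (n : ℤ) * α x₁ := by
    rw [← hf, hx₁]
    exact (Eβ.apply_symm_apply 1).symm
  have : (n : ℤ) ∣ 1 := ⟨α x₁, h1⟩
  have := Int.le_of_dvd one_pos this
  omega

section Aux

variable (C : Type u) [Category.{v} C] [Abelian C] [HasDerivedCategory C]

/-- The single functor is isomorphic to the single cochain complex functor composed with `Q`. -/
noncomputable def singleQIso :
    DerivedCategory.singleFunctor C 0 ≅
      HomologicalComplex.single C (ComplexShape.up ℤ) 0 ⋙ DerivedCategory.Q :=
  (SingleFunctors.evaluation _ _ 0).mapIso (DerivedCategory.singleFunctorsPostcompQIso C)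

/-- The homology in degree 0 of the single object in the derived category. -/
noncomputable def εIso :
    DerivedCategory.singleFunctor C 0 ⋙ DerivedCategory.homologyFunctor C 0 ≅ 𝟭 C :=
  Functor.isoWhiskerRight (singleQIso C) _ ≪≫ Functor.associator _ _ _ ≪≫
    Functor.isoWhiskerLeft _ (DerivedCategory.homologyFunctorFactors C 0) ≪≫
    HomologicalComplex.homologyFunctorSingleIso C _ 0

lemma isZero_homology_single (k : ℤ) (hk : k ≠ 0) (M : C) :
    IsZero ((DerivedCategory.homologyFunctor C k).obj
      ((DerivedCategory.singleFunctor C 0).obj M)) := by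
  have e : (DerivedCategory.homologyFunctor C k).obj ((DerivedCategory.singleFunctor C 0).obj M) ≅
      ((HomologicalComplex.single C (ComplexShape.up ℤ) 0).obj M).homology k :=
    (DerivedCategory.homologyFunctor C k).mapIso ((singleQIso C).app M) ≪≫
      (DerivedCategory.homologyFunctorFactors C k).app _
  exact (HomologicalComplex.isZero_single_obj_homology _ 0 M k hk).of_iso e

end Aux

/-- In the derived category `D(ℤ)`, for every `n ≥ 2`, the morphism from the
distinguished triangle `ℤ →n→ ℤ →qₙ→ ℤ/n →εₙ→ ℤ[1]` (induced by the short exact sequence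
`0 → ℤ →n→ ℤ →qₙ→ ℤ/n → 0`) to its rotation `ℤ →qₙ→ ℤ/n →εₙ→ ℤ[1] →−n→ ℤ[1]`, with
components `φ₁ = 0`, `φ₂ = 0` and `φ₃ = εₙ`, is a morphism of distinguished triangles which
is not middling good. -/
theorem rotation_morphism_not_middlingGood [HasDerivedCategory AddCommGrpCat.{0}]
    (n : ℕ) (hn : 2 ≤ n)
    (w : AddCommGrpCat.ofHom (AddMonoidHom.mulLeft (n : ℤ)) ≫
        AddCommGrpCat.ofHom (Int.castAddHom (ZMod n)) = 0)
    (hS : (ShortComplex.mk (AddCommGrpCat.ofHom (AddMonoidHom.mulLeft (n : ℤ)))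
        (AddCommGrpCat.ofHom (Int.castAddHom (ZMod n))) w).ShortExact) :
    (∃ ψ : hS.singleTriangle ⟶ hS.singleTriangle.rotate,
        ψ.hom₁ = 0 ∧ ψ.hom₂ = 0 ∧ ψ.hom₃ = hS.singleTriangle.mor₃) ∧
    ∀ ψ : hS.singleTriangle ⟶ hS.singleTriangle.rotate,
      ψ.hom₁ = 0 → ψ.hom₂ = 0 → ψ.hom₃ = hS.singleTriangle.mor₃ →
        ¬ MiddlingGood ψ := by
  have hT := hS.singleTriangle_distinguished
  constructor
  · -- existence of the morphism of triangles
    refine ⟨{ hom₁ := 0, hom₂ := 0, hom₃ := hS.singleTriangle.mor₃,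
              comm₁ := by exact comp_zero.trans zero_comp.symm, comm₂ := ?_, comm₃ := ?_ }, rfl, rfl, rfl⟩
    · exact (comp_distTriang_mor_zero₂₃ _ hT).trans zero_comp.symm
    · erw [Functor.map_zero, comp_zero, Preadditive.comp_neg, comp_distTriang_mor_zero₃₁ _ hT, neg_zero]
  · -- non-middling-goodness
    intro ψ h1 h2 h3 hMG
    obtain ⟨T₃, hT₃, a, b, c, a', b', c', hC₁, hC₂, hC₃, H1, H2, H3, H4, H5, H6⟩ := hMG
    rw [h1] at hC₁
    rw [h2] at hC₂
    rw [h3] at hC₃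
    -- notation
    have h10 : (-1 : ℤ) + 1 = 0 := by omega
    set Fm := DerivedCategory.homologyFunctor AddCommGrpCat.{0} (-1 : ℤ) with hFm
    set F0 := DerivedCategory.homologyFunctor AddCommGrpCat.{0} (0 : ℤ) with hF0
    let ZI := AddCommGrpCat.of ℤ
    let ZnI := AddCommGrpCat.of (ZMod n)
    let Z : DerivedCategory AddCommGrpCat.{0} := (DerivedCategory.singleFunctor AddCommGrpCat 0).obj ZI
    let ε := εIso AddCommGrpCat.{0}
    let εZ : F0.obj Z ⟶ ZI := ε.hom.app ZI
    let εZn : F0.obj ((DerivedCategory.singleFunctor AddCommGrpCat 0).obj ZnI) ⟶ ZnI :=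
      ε.hom.app ZnI
    have hIεZ : IsIso εZ := inferInstance
    have hIεZn : IsIso εZn := inferInstance
    -- the column triangles
    have hC₁' : Triangle.mk (0 : hS.singleTriangle.obj₁ ⟶ hS.singleTriangle.rotate.obj₁) a a' ∈
        distTriang (DerivedCategory AddCommGrpCat.{0}) := hC₁
    have hC₂' : Triangle.mk (0 : hS.singleTriangle.obj₂ ⟶ hS.singleTriangle.rotate.obj₂) b b' ∈
        distTriang (DerivedCategory AddCommGrpCat.{0}) := hC₂
    set C₁ := Triangle.mk (0 : hS.singleTriangle.obj₁ ⟶ hS.singleTriangle.rotate.obj₁) a a'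
      with hC₁def
    set C₂ := Triangle.mk (0 : hS.singleTriangle.obj₂ ⟶ hS.singleTriangle.rotate.obj₂) b b'
      with hC₂def
    -- vanishing of homology of singles
    have hzm : ∀ M : AddCommGrpCat.{0}, IsZero (Fm.obj ((DerivedCategory.singleFunctor AddCommGrpCat 0).obj M)) :=
      fun M => isZero_homology_single _ (-1) (by omega) M
    have hz1 : ∀ M : AddCommGrpCat.{0}, IsZero ((DerivedCategory.homologyFunctor AddCommGrpCat.{0} (1 : ℤ)).obj
        ((DerivedCategory.singleFunctor AddCommGrpCat 0).obj M)) :=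
      fun M => isZero_homology_single _ 1 (by omega) M
    have hmapC₁ : ∀ k : ℤ, (DerivedCategory.homologyFunctor AddCommGrpCat.{0} k).map C₁.mor₁ = 0 := by
      intro k
      rw [show C₁.mor₁ = 0 from rfl]
      exact Functor.map_zero _ _ _
    have hmapC₂ : ∀ k : ℤ, (DerivedCategory.homologyFunctor AddCommGrpCat.{0} k).map C₂.mor₁ = 0 := by
      intro k
      rw [show C₂.mor₁ = 0 from rfl]
      exact Functor.map_zero _ _ _
    -- the connecting maps of the column triangles
    set δ₁ := DerivedCategory.HomologySequence.δ C₁ (-1) 0 h10 with hδ₁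
    set δ₂ := DerivedCategory.HomologySequence.δ C₂ (-1) 0 h10 with hδ₂
    set δT := DerivedCategory.HomologySequence.δ T₃ (-1) 0 h10 with hδT
    -- δ₁ is an isomorphism
    have hmono₁ : Mono δ₁ :=
      (DerivedCategory.HomologySequence.exact₃ C₁ hC₁' (-1) 0 h10).mono_g
        ((hzm ZI).eq_of_src _ _)
    have hepi₁ : Epi δ₁ :=
      (DerivedCategory.HomologySequence.exact₁ C₁ hC₁' (-1) 0 h10).epi_f (hmapC₁ 0)
    have hiso₁ : IsIso δ₁ := isIso_of_mono_of_epi _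
    -- δ₂ is an isomorphism
    have hmono₂ : Mono δ₂ :=
      (DerivedCategory.HomologySequence.exact₃ C₂ hC₂' (-1) 0 h10).mono_g
        ((hzm ZnI).eq_of_src _ _)
    have hepi₂ : Epi δ₂ :=
      (DerivedCategory.HomologySequence.exact₁ C₂ hC₂' (-1) 0 h10).epi_f (hmapC₂ 0)
    have hiso₂ : IsIso δ₂ := isIso_of_mono_of_epi _
    -- F0.map a and F0.map b are isomorphisms
    have hmonoa : Mono (F0.map a) :=
      (DerivedCategory.HomologySequence.exact₂ C₁ hC₁' 0).mono_g (hmapC₁ 0)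
    have hepia : Epi (F0.map a) :=
      (DerivedCategory.HomologySequence.exact₃ C₁ hC₁' 0 1 (by omega)).epi_f
        ((hz1 ZI).eq_of_tgt _ _)
    have hisoa : IsIso (F0.map a) := isIso_of_mono_of_epi _
    have hmonob : Mono (F0.map b) :=
      (DerivedCategory.HomologySequence.exact₂ C₂ hC₂' 0).mono_g (hmapC₂ 0)
    have hepib : Epi (F0.map b) :=
      (DerivedCategory.HomologySequence.exact₃ C₂ hC₂' 0 1 (by omega)).epi_f
        ((hz1 ZI).eq_of_tgt _ _)
    have hisob : IsIso (F0.map b) := isIso_of_mono_of_epi _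
    -- identification of T₃.obj₃ with Z⟦1⟧ via the rotated triangle
    have hR := rot_of_distTriang _ (rot_of_distTriang _ hT)
    have e3 : Triangle.mk hS.singleTriangle.mor₃ c c' ≅ hS.singleTriangle.rotate.rotate :=
      isoTriangleOfIso₁₂ _ _ hC₃ hR (Iso.refl _) (Iso.refl _) (by exact (Category.comp_id _).trans (Category.id_comp _).symm)
    let φ : T₃.obj₃ ≅ hS.singleTriangle.rotate.rotate.obj₃ := Triangle.π₃.mapIso e3
    -- an isomorphism Fm(Z⟦1⟧) ≅ F0(Z) from the contractible triangle
    have hcdist := rot_of_distTriang _ (contractible_distinguished Z)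
    set Tc := (contractibleTriangle Z).rotate with hTcdef
    have hzTc : IsZero (Fm.obj Tc.obj₂) := by
      rw [IsZero.iff_id_eq_zero, ← Fm.map_id,
        (show IsZero Tc.obj₂ from isZero_zero _).eq_of_src (𝟙 Tc.obj₂) 0, Functor.map_zero]
    have hmapTc : (DerivedCategory.homologyFunctor AddCommGrpCat.{0} 0).map Tc.mor₁ = 0 := by
      rw [show Tc.mor₁ = 0 from (isZero_zero _).eq_of_tgt _ _, Functor.map_zero]
    set δc := DerivedCategory.HomologySequence.δ Tc (-1) 0 h10 with hδc
    have hmonoc : Mono δc :=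
      (DerivedCategory.HomologySequence.exact₃ Tc hcdist (-1) 0 h10).mono_g (hzTc.eq_of_src _ _)
    have hepic : Epi δc :=
      (DerivedCategory.HomologySequence.exact₁ Tc hcdist (-1) 0 h10).epi_f hmapTc
    have hisoc : IsIso δc := isIso_of_mono_of_epi _
    -- the comparison morphisms to ℤ and ℤ/n
    let αm : Fm.obj T₃.obj₁ ⟶ ZI := δ₁ ≫ εZ
    let βm : Fm.obj T₃.obj₂ ⟶ ZI := δ₂ ≫ εZ
    let γm : Fm.obj T₃.obj₃ ⟶ ZI := Fm.map φ.hom ≫ δc ≫ εZ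
    let eAm : F0.obj T₃.obj₁ ⟶ ZI := inv (F0.map a) ≫ εZ
    let eBm : F0.obj T₃.obj₂ ⟶ ZnI := inv (F0.map b) ≫ εZn
    -- the first morphism of the triangle is multiplication by n
    have hofHom : AddCommGrpCat.ofHom (AddMonoidHom.mulLeft (n : ℤ)) = (n : ℤ) • 𝟙 ZI := by
      apply AddCommGrpCat.hom_ext
      apply AddMonoidHom.ext_int
      simp
      show (n : ℤ) = (n : ℤ) * 1
      rw [mul_one]
    have hmor : hS.singleTriangle.mor₁ =
        (DerivedCategory.singleFunctor AddCommGrpCat 0).map ((n : ℤ) • 𝟙 ZI) := by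
      show (DerivedCategory.singleFunctor AddCommGrpCat 0).map
        (AddCommGrpCat.ofHom (AddMonoidHom.mulLeft (n : ℤ))) = _
      rw [hofHom]
    -- key relation : Fm(T₃.mor₁) ≫ δ₂ = n • δ₁
    have key : Fm.map T₃.mor₁ ≫ δ₂ = (n : ℤ) • δ₁ := by
      have h' : ((DerivedCategory.homologyFunctor AddCommGrpCat.{0} 0).shift (-1)).map T₃.mor₁ ≫
            (DerivedCategory.homologyFunctor AddCommGrpCat.{0} 0).shiftMap b' (-1) 0 (by omega) =
          (n : ℤ) • (DerivedCategory.homologyFunctor AddCommGrpCat.{0} 0).shiftMap a' (-1) 0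
            (by omega) := by
        erw [← Functor.shiftMap_comp', H4, hmor, Functor.shiftMap_comp]
        erw [Functor.map_zsmul, CategoryTheory.Functor.map_id, Functor.map_zsmul,
          Preadditive.comp_zsmul]
        simp
        erw [CategoryTheory.Functor.map_id, Category.comp_id]
        rfl
      exact h'
    -- relation for the degree-0 maps
    have hH1 : (DerivedCategory.singleFunctor AddCommGrpCat 0).map
        (AddCommGrpCat.ofHom (Int.castAddHom (ZMod n))) ≫ b = a ≫ T₃.mor₁ := H1
    have h0 : F0.map ((DerivedCategory.singleFunctor AddCommGrpCat 0).map
          (AddCommGrpCat.ofHom (Int.castAddHom (ZMod n)))) ≫ F0.map b =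
        F0.map a ≫ F0.map T₃.mor₁ := by
      erw [← Functor.map_comp, ← Functor.map_comp, hH1]
      rfl
    have hnat : F0.map ((DerivedCategory.singleFunctor AddCommGrpCat 0).map
          (AddCommGrpCat.ofHom (Int.castAddHom (ZMod n)))) ≫ εZn =
        εZ ≫ AddCommGrpCat.ofHom (Int.castAddHom (ZMod n)) := by
      have h := ε.hom.naturality (AddCommGrpCat.ofHom (Int.castAddHom (ZMod n)))
      simpa using h
    have hmeq : F0.map T₃.mor₁ ≫ eBm = eAm ≫ AddCommGrpCat.ofHom (Int.castAddHom (ZMod n)) := by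
      show F0.map T₃.mor₁ ≫ inv (F0.map b) ≫ εZn =
        (inv (F0.map a) ≫ εZ) ≫ AddCommGrpCat.ofHom (Int.castAddHom (ZMod n))
      have e1 : F0.map T₃.mor₁ = inv (F0.map a) ≫
          (F0.map ((DerivedCategory.singleFunctor AddCommGrpCat 0).map
            (AddCommGrpCat.ofHom (Int.castAddHom (ZMod n)))) ≫ F0.map b) :=
        (IsIso.eq_inv_comp _).2 h0.symm
      rw [e1]
      simp only [Category.assoc, IsIso.hom_inv_id_assoc]
      erw [IsIso.hom_inv_id_assoc, hnat]
      exact (Category.assoc _ _ _).symm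
    -- bijectivity of the comparison maps
    have hbijβ : Function.Bijective βm := by
      have : IsIso (δ₂ ≫ εZ) := @IsIso.comp_isIso _ _ _ _ _ _ _ hiso₂ hIεZ
      exact ConcreteCategory.bijective_of_isIso (δ₂ ≫ εZ)
    have hbijγ : Function.Bijective γm := by
      have : IsIso (Fm.map φ.hom ≫ δc ≫ εZ) :=
        @IsIso.comp_isIso _ _ _ _ _ _ _ inferInstance (@IsIso.comp_isIso _ _ _ _ _ _ _ hisoc hIεZ)
      exact ConcreteCategory.bijective_of_isIso (Fm.map φ.hom ≫ δc ≫ εZ)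
    have hbijA : Function.Bijective eAm := by
      have : IsIso (inv (F0.map a) ≫ εZ) := @IsIso.comp_isIso _ _ _ _ _ _ _ inferInstance hIεZ
      exact ConcreteCategory.bijective_of_isIso (inv (F0.map a) ≫ εZ)
    have hbijB : Function.Bijective eBm := by
      have : IsIso (inv (F0.map b) ≫ εZn) := @IsIso.comp_isIso _ _ _ _ _ _ _ inferInstance hIεZn
      exact ConcreteCategory.bijective_of_isIso (inv (F0.map b) ≫ εZn)
    -- exactness, elementwise
    have ex1 := (ShortComplex.ab_exact_iff _).1
      (DerivedCategory.HomologySequence.exact₂ T₃ hT₃ (-1))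
    have ex3 := (ShortComplex.ab_exact_iff _).1
      (DerivedCategory.HomologySequence.exact₁ T₃ hT₃ (-1) 0 h10)
    have hgd0 := DerivedCategory.HomologySequence.comp_δ T₃ hT₃ (-1) 0 h10
    -- the multiplication relation, elementwise
    have keyβ : Fm.map T₃.mor₁ ≫ βm = (n : ℤ) • αm := by
      show Fm.map T₃.mor₁ ≫ δ₂ ≫ εZ = (n : ℤ) • (δ₁ ≫ εZ)
      erw [← Category.assoc, key, Preadditive.zsmul_comp]
      rfl
    -- apply the master lemma
    exact master_contradiction n hn
      (Fm.map T₃.mor₁).hom (Fm.map T₃.mor₂).hom δT.hom (F0.map T₃.mor₁).hom αm.hom βm.hom γm.hom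
      eAm.hom eBm.hom
      hbijβ hbijγ hbijA hbijB.1
      (fun x => by
        have hx : βm ((Fm.map T₃.mor₁) x) = (n : ℤ) • (αm x) :=
          ConcreteCategory.congr_hom keyβ x
        have h2 : (n : ℤ) • (show ℤ from αm x) = (n : ℤ) * (show ℤ from αm x) :=
          smul_eq_mul ..
        exact hx.trans h2)
      (fun x => ConcreteCategory.congr_hom hmeq x)
      ex1
      (fun x₂ => ConcreteCategory.congr_hom hgd0 x₂)
      ex3
end
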